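/- arXiv:1303.5869 — 5 statements merged into one kernel-verified Lean document; each statement's English description precedes it below -/
import Mathlib

section
/- For all integers k ≥ 0 the matrices A^k = A^k(0) satisfy the recursion A^{k+1} = A^k·S_r + S_q^T·A^k; consequently A^k = Σ_{j=0}^{k} C(k,j)·(S_q^T)^j·A^0·S_r^{k−j}; moreover, for every z ∈ ℝ and every k ≥ 0 one has the polynomial expansion A^k(z) = Σ_{j=0}^{k} C(k,j)·z^{k−j}·A^j. -/
open Matrix Kronecker

noncomputable section

/-- The `k × k` shift matrix with `(i,j)` entry `δ_{i+1,j}`. -/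
def Sh (k : ℕ) : Matrix (Fin k) (Fin k) ℝ :=
  Matrix.of fun i j => if (i : ℕ) + 1 = (j : ℕ) then 1 else 0

/-- The matrix `A^k(z) ∈ ℝ^{q×r}`, with entries
`k!/(i!·j!·(k−i−j)!)·z^{k−i−j} = C(k,i)·C(k−i,j)·z^{k−i−j}` for `i+j ≤ k`, else `0`. -/
def Amat (q r k : ℕ) (z : ℝ) : Matrix (Fin q) (Fin r) ℝ :=
  Matrix.of fun i j =>
    if (i : ℕ) + (j : ℕ) ≤ k then
      (Nat.choose k i : ℝ) * (Nat.choose (k - i) j : ℝ) * z ^ (k - i - j)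
    else 0

/-- The block matrix `𝒜(z) ∈ ℝ^{μq×νr}` with `(i,j)` block `A^{i+j}(z)`. -/
def Acal (q r μ ν : ℕ) (z : ℝ) : Matrix (Fin μ × Fin q) (Fin ν × Fin r) ℝ :=
  Matrix.of fun p p' => Amat q r ((p.1 : ℕ) + (p'.1 : ℕ)) z p.2 p'.2

/-- `A^0 = e₀ f₀ᵀ ∈ ℝ^{q×r}`. -/
def A0 (q r : ℕ) : Matrix (Fin q) (Fin r) ℝ :=
  Matrix.of fun a b => if (a : ℕ) = 0 ∧ (b : ℕ) = 0 then 1 else 0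

/-- The block matrix `Ā ∈ ℝ^{μq×νr}` with `(i,j)` block `(S_qᵀ)^j · A^0 · S_r^i`. -/
def Abar (q r μ ν : ℕ) : Matrix (Fin μ × Fin q) (Fin ν × Fin r) ℝ :=
  Matrix.of fun p p' =>
    (((Sh q)ᵀ) ^ (p'.1 : ℕ) * A0 q r * (Sh r) ^ (p.1 : ℕ)) p.2 p'.2

/-- `J_k(z) = z·I_k + S_kᵀ`. -/
def Jmat (k : ℕ) (z : ℝ) : Matrix (Fin k) (Fin k) ℝ := z • 1 + (Sh k)ᵀ

/-- The block lower-triangular matrix `𝓛_{m,k}(z)` with `(i,j)` block `C(i,j)·J_k(z)^{i−j}`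
for `i ≥ j` and `0` otherwise. -/
def Lmat (m k : ℕ) (z : ℝ) : Matrix (Fin m × Fin k) (Fin m × Fin k) ℝ :=
  Matrix.of fun p p' =>
    if (p'.1 : ℕ) ≤ (p.1 : ℕ) then
      (Nat.choose p.1 p'.1 : ℝ) * ((Jmat k z) ^ ((p.1 : ℕ) - (p'.1 : ℕ))) p.2 p'.2
    else 0

/-- Natural (block row-major) identification of `Fin (m*n)` with `Fin m × Fin n`. -/
def bIdx (m n : ℕ) : Fin (m * n) → Fin m × Fin n := fun x => finProdFinEquiv.symm x

/-- `M^{(n)}(z) ∈ ℝ^{q×r}`, the `n`-th derivative of `M(z) = u(z)w(z)`,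
whose `(a,b)` entry is the `n`-th derivative of `z^{a+b}`. -/
def Md (q r n : ℕ) (z : ℝ) : Matrix (Fin q) (Fin r) ℝ :=
  Matrix.of fun a b => iteratedDeriv n (fun t : ℝ => t ^ ((a : ℕ) + (b : ℕ))) z

/-- The block matrix `𝓜(z) ∈ ℝ^{μq×νr}` with `(i,j)` block `M^{(i+j)}(z)`. -/
def Mcal (q r μ ν : ℕ) (z : ℝ) : Matrix (Fin μ × Fin q) (Fin ν × Fin r) ℝ :=
  Matrix.of fun p p' => Md q r ((p.1 : ℕ) + (p'.1 : ℕ)) z p.2 p'.2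

/-- The block matrix `𝓝(z) ∈ ℝ^{μq×νr}` with `(i,j)` block `M^{(i+j)}(z)/(i!·j!)`. -/
def Ncal (q r μ ν : ℕ) (z : ℝ) : Matrix (Fin μ × Fin q) (Fin ν × Fin r) ℝ :=
  Matrix.of fun p p' =>
    Md q r ((p.1 : ℕ) + (p'.1 : ℕ)) z p.2 p'.2 /
      ((Nat.factorial (p.1 : ℕ) : ℝ) * (Nat.factorial (p'.1 : ℕ) : ℝ))

/-- `𝓝^0(z) = (M(z)/0!, …, M^{(ν−1)}(z)/(ν−1)!) ∈ ℝ^{q×νr}`. -/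
def Ncal0 (q r ν : ℕ) (z : ℝ) : Matrix (Fin q) (Fin ν × Fin r) ℝ :=
  Matrix.of fun a p => Md q r (p.1 : ℕ) z a p.2 / (Nat.factorial (p.1 : ℕ) : ℝ)

/-- `𝓜^0(z) = (M(z), M'(z), …, M^{(ν−1)}(z)) ∈ ℝ^{q×νr}`. -/
def M0cal (q r ν : ℕ) (z : ℝ) : Matrix (Fin q) (Fin ν × Fin r) ℝ :=
  Matrix.of fun a p => Md q r (p.1 : ℕ) z a p.2

/-- `U_q(z)` with columns `u(z), u'(z), …, u^{(q−1)}(z)`, where `u_a(z) = z^a`. -/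
def Uq (q : ℕ) (z : ℝ) : Matrix (Fin q) (Fin q) ℝ :=
  Matrix.of fun a j => iteratedDeriv (j : ℕ) (fun t : ℝ => t ^ (a : ℕ)) z

/-- `W_r(z)` with rows `w(z), w'(z), …, w^{(r−1)}(z)`, where `w_b(z) = z^b`. -/
def Wrm (r : ℕ) (z : ℝ) : Matrix (Fin r) (Fin r) ℝ :=
  Matrix.of fun i b => iteratedDeriv (i : ℕ) (fun t : ℝ => t ^ (b : ℕ)) z

/-- `Ũ_m(z)` with entries `C(i,j)·z^{i−j}` for `i ≥ j` and `0` otherwise. -/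
def Ut (m : ℕ) (z : ℝ) : Matrix (Fin m) (Fin m) ℝ :=
  Matrix.of fun i j =>
    if (j : ℕ) ≤ (i : ℕ) then (Nat.choose i j : ℝ) * z ^ ((i : ℕ) - (j : ℕ)) else 0

/-- `W̃_m(z)` with entries `C(j,i)·z^{j−i}` for `j ≥ i` and `0` otherwise. -/
def Wt (m : ℕ) (z : ℝ) : Matrix (Fin m) (Fin m) ℝ :=
  Matrix.of fun i j =>
    if (i : ℕ) ≤ (j : ℕ) then (Nat.choose j i : ℝ) * z ^ ((j : ℕ) - (i : ℕ)) else 0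

/-- `D_m`, the diagonal matrix with `(i,i)` entry `i!`. -/
def Dm (m : ℕ) : Matrix (Fin m) (Fin m) ℝ :=
  Matrix.diagonal fun i => (Nat.factorial (i : ℕ) : ℝ)

/-- The block matrix `Â` whose `(i,j)` block has `(k,l)` entry `C(i+j,i)` if `k+l = i+j`, else 0. -/
def Ahat (q r μ ν : ℕ) : Matrix (Fin μ × Fin q) (Fin ν × Fin r) ℝ :=
  Matrix.of fun p p' =>
    if (p.2 : ℕ) + (p'.2 : ℕ) = (p.1 : ℕ) + (p'.1 : ℕ) then
      (Nat.choose ((p.1 : ℕ) + (p'.1 : ℕ)) (p.1 : ℕ) : ℝ)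
    else 0

/-- `F(z) ∈ ℝ^{r×(r−1)}` with `F_{ii} = −z`, `F_{i+1,i} = 1`, else `0`. -/
def Fm (r : ℕ) (z : ℝ) : Matrix (Fin r) (Fin (r - 1)) ℝ :=
  Matrix.of fun a b =>
    if (a : ℕ) = (b : ℕ) then -z else if (a : ℕ) = (b : ℕ) + 1 then 1 else 0

/-- `F'(z)`, the (constant) derivative of `F(z)`: `−1` on the diagonal, `0` elsewhere. -/
def Fm' (r : ℕ) : Matrix (Fin r) (Fin (r - 1)) ℝ :=
  Matrix.of fun a b => if (a : ℕ) = (b : ℕ) then -1 else 0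

/-- `G(z) ∈ ℝ^{r×r}` with entries `z^{j−i−1}` for `j > i`, else `0`. -/
def Gm (r : ℕ) (z : ℝ) : Matrix (Fin r) (Fin r) ℝ :=
  Matrix.of fun i j => if (i : ℕ) < (j : ℕ) then z ^ ((j : ℕ) - (i : ℕ) - 1) else 0

/-- entrywise `j`-th derivative `G^{(n)}(z)`. -/
def Gd (r n : ℕ) (z : ℝ) : Matrix (Fin r) (Fin r) ℝ :=
  Matrix.of fun i j =>
    iteratedDeriv n (fun t : ℝ => if (i : ℕ) < (j : ℕ) then t ^ ((j : ℕ) - (i : ℕ) - 1) else 0) z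

/-- the row vector `w(z)` with entries `z^b`. -/
def wv (r : ℕ) (z : ℝ) : Fin r → ℝ := fun b => z ^ (b : ℕ)

/-- the `n`-th derivative `w^{(n)}(z)`. -/
def wd (r n : ℕ) (z : ℝ) : Fin r → ℝ := fun b => iteratedDeriv n (fun t : ℝ => t ^ (b : ℕ)) z

/-- the `n`-th derivative `u^{(n)}(z)` of the column vector `u(z)` with entries `z^a`. -/
def ud (q n : ℕ) (z : ℝ) : Fin q → ℝ := fun a => iteratedDeriv n (fun t : ℝ => t ^ (a : ℕ)) z

/-- The matrix `K̄(z)`: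
`[[I_q⊗F(z) + S_q⊗F'(z), −ℓ_q fᵀ ⊗ G(z)], [0, I_{ν−q}⊗I_r − S_{ν−q}⊗G(z)]]`. -/
def Kbar (q r ν : ℕ) (z : ℝ) :
    Matrix (Fin ν × Fin r) ((Fin q × Fin (r - 1)) ⊕ (Fin (ν - q) × Fin r)) ℝ :=
  Matrix.of fun p s =>
    match s with
    | Sum.inl c =>
        (if (p.1 : ℕ) = (c.1 : ℕ) then Fm r z p.2 c.2 else 0) +
        (if (p.1 : ℕ) + 1 = (c.1 : ℕ) then Fm' r p.2 c.2 else 0)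
    | Sum.inr c =>
        (if (p.1 : ℕ) = q + (c.1 : ℕ) then (if p.2 = c.2 then 1 else 0) else 0) +
        (if (p.1 : ℕ) + 1 = q + (c.1 : ℕ) then -(Gm r z p.2 c.2) else 0)

/-- `F_k(z) ∈ ℝ^{(r−k)×(r−1−k)}`. -/
def Fmk (r k : ℕ) (z : ℝ) : Matrix (Fin (r - k)) (Fin (r - (k + 1))) ℝ :=
  Matrix.of fun a b =>
    if (a : ℕ) = (b : ℕ) then -z else if (a : ℕ) = (b : ℕ) + 1 then 1 else 0

/-- `F_k'(z)`, the (constant) derivative of `F_k(z)`. -/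
def Fmk' (r k : ℕ) : Matrix (Fin (r - k)) (Fin (r - (k + 1))) ℝ :=
  Matrix.of fun a b => if (a : ℕ) = (b : ℕ) then -1 else 0

/-- `K_k(z) = I_ν ⊗ F_k(z) + S_ν ⊗ F_k'(z)`. -/
def Kk (ν r k : ℕ) (z : ℝ) :
    Matrix (Fin ν × Fin (r - k)) (Fin ν × Fin (r - (k + 1))) ℝ :=
  (1 : Matrix (Fin ν) (Fin ν) ℝ) ⊗ₖ Fmk r k z + Sh ν ⊗ₖ Fmk' r k

/-- `KP ν r z m = K_0(z) · K_1(z) ⋯ K_{m−1}(z)` (so `KP ν r z μ = 𝒦^{μ−1}(z)`). -/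
def KP (ν r : ℕ) (z : ℝ) : (m : ℕ) → Matrix (Fin ν × Fin r) (Fin ν × Fin (r - m)) ℝ
  | 0 => Matrix.of fun p p' => if p.1 = p'.1 ∧ (p.2 : ℕ) = (p'.2 : ℕ) then 1 else 0
  | m + 1 => KP ν r z m * Kk ν r m z

/-- `𝒜^0 = (A^0, A^1, …, A^{ν−1}) ∈ ℝ^{q×νr}` (at `z = 0`). -/
def A0row (q r ν : ℕ) : Matrix (Fin q) (Fin ν × Fin r) ℝ :=
  Matrix.of fun a p =>
    if (a : ℕ) + (p.2 : ℕ) = (p.1 : ℕ) then (Nat.choose (p.1 : ℕ) (a : ℕ) : ℝ) else 0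

/-- `B^k ∈ ℝ^{r×q}` with entries `(−1)^i·C(q,k+1)` if `i+j = k`, else `0`. -/
def Bk (q r k : ℕ) : Matrix (Fin r) (Fin q) ℝ :=
  Matrix.of fun i j =>
    if (i : ℕ) + (j : ℕ) = k then (-1 : ℝ) ^ (i : ℕ) * (Nat.choose q (k + 1) : ℝ) else 0

/-- `𝓑^0 ∈ ℝ^{νr×q}`, the blocks `B^0, …, B^{ν−1}` stacked vertically. -/
def B0cal (q r ν : ℕ) : Matrix (Fin ν × Fin r) (Fin q) ℝ :=
  Matrix.of fun p j => Bk q r (p.1 : ℕ) p.2 j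

/-- Left multiplication by a fixed matrix, as a linear map. -/
def mulLeftLM {m n p : Type*} [Fintype n] (M : Matrix m n ℝ) :
    Matrix n p ℝ →ₗ[ℝ] Matrix m p ℝ where
  toFun X := M * X
  map_add' X Y := Matrix.mul_add M X Y
  map_smul' c X := by simp [Matrix.mul_smul]

/-- The right inverse `𝓜(z)⁺`. -/
def Mplus (q r μ ν : ℕ) (z : ℝ) : Matrix (Fin ν × Fin r) (Fin μ × Fin q) ℝ :=
  ((1 : Matrix (Fin ν) (Fin ν) ℝ) ⊗ₖ (Wrm r z)⁻¹) * (Lmat ν r 0)⁻¹ *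
    (Abar q r μ ν)ᵀ * (Lmat μ q 0)⁻¹ * ((1 : Matrix (Fin μ) (Fin μ) ℝ) ⊗ₖ (Uq q z)⁻¹)

lemma amat_zero_apply (q r k : ℕ) (i : Fin q) (j : Fin r) :
    Amat q r k 0 i j = if (i:ℕ) + (j:ℕ) = k then (Nat.choose k i : ℝ) else 0 := by
  simp only [Amat, Matrix.of_apply]
  rcases eq_or_ne ((i:ℕ)+(j:ℕ)) k with h | h
  · have h0 : k - (i:ℕ) - (j:ℕ) = 0 := by omega
    have hj : (k - (i:ℕ)).choose j = 1 := by
      have : k - (i:ℕ) = (j:ℕ) := by omega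
      simp [this]
    simp [h, h0, hj, if_pos (by omega : (i:ℕ)+(j:ℕ) ≤ k)]
  · rcases lt_or_ge k ((i:ℕ)+(j:ℕ)) with hlt | hle
    · rw [if_neg (by omega), if_neg h]
    · rw [if_pos hle, if_neg h, zero_pow (by omega : k - (i:ℕ) - (j:ℕ) ≠ 0), mul_zero]

lemma mul_sh_apply {q r : ℕ} (M : Matrix (Fin q) (Fin r) ℝ) (i : Fin q) (j : Fin r) :
    (M * Sh r) i j =
      if h : 0 < (j:ℕ) then M i ⟨(j:ℕ)-1, lt_of_le_of_lt (Nat.sub_le _ _) j.isLt⟩ else 0 := by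
  rw [Matrix.mul_apply]
  split_ifs with h
  · rw [Finset.sum_eq_single (⟨(j:ℕ)-1, lt_of_le_of_lt (Nat.sub_le _ _) j.isLt⟩ : Fin r)]
    · simp [Sh, Nat.sub_add_cancel h]
    · intro b _ hb
      have : (b:ℕ) + 1 ≠ (j:ℕ) := fun hc => hb (by ext; simp; omega)
      simp [Sh, this]
    · simp
  · apply Finset.sum_eq_zero
    intro b _
    have : (b:ℕ) + 1 ≠ (j:ℕ) := by omega
    simp [Sh, this]

lemma shT_mul_apply {q r : ℕ} (M : Matrix (Fin q) (Fin r) ℝ) (i : Fin q) (j : Fin r) :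
    ((Sh q)ᵀ * M) i j =
      if h : 0 < (i:ℕ) then M ⟨(i:ℕ)-1, lt_of_le_of_lt (Nat.sub_le _ _) i.isLt⟩ j else 0 := by
  rw [Matrix.mul_apply]
  split_ifs with h
  · rw [Finset.sum_eq_single (⟨(i:ℕ)-1, lt_of_le_of_lt (Nat.sub_le _ _) i.isLt⟩ : Fin q)]
    · simp [Sh, Nat.sub_add_cancel h]
    · intro b _ hb
      have : (b:ℕ) + 1 ≠ (i:ℕ) := fun hc => hb (by ext; simp; omega)
      simp [Sh, this]
    · simp
  · apply Finset.sum_eq_zero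
    intro b _
    have : (b:ℕ) + 1 ≠ (i:ℕ) := by omega
    simp [Sh, this]

theorem statement0 (q r : ℕ) (hq : 0 < q) (hr : 0 < r) :
    (∀ k : ℕ, Amat q r (k + 1) 0 = Amat q r k 0 * Sh r + (Sh q)ᵀ * Amat q r k 0) ∧
    (∀ k : ℕ, Amat q r k 0 =
      ∑ j ∈ Finset.range (k + 1),
        (Nat.choose k j : ℝ) • (((Sh q)ᵀ) ^ j * Amat q r 0 0 * (Sh r) ^ (k - j))) ∧
    (∀ (z : ℝ) (k : ℕ), Amat q r k z =
      ∑ j ∈ Finset.range (k + 1),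
        ((Nat.choose k j : ℝ) * z ^ (k - j)) • Amat q r j 0) := by
  have h1 : ∀ k : ℕ, Amat q r (k + 1) 0 = Amat q r k 0 * Sh r + (Sh q)ᵀ * Amat q r k 0 := by
    intro k
    ext i j
    rw [Matrix.add_apply, mul_sh_apply, shT_mul_apply, amat_zero_apply]
    rcases Nat.eq_zero_or_pos (i:ℕ) with hi | hi <;>
      rcases Nat.eq_zero_or_pos (j:ℕ) with hj | hj
    · rw [dif_neg (by omega), dif_neg (by omega)]
      rw [if_neg (by omega)]
      simp
    · rw [dif_pos hj, dif_neg (by omega), amat_zero_apply, add_zero]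
      rcases eq_or_ne ((i:ℕ)+(j:ℕ)) (k+1) with h | h
      · rw [if_pos h, if_pos (by simpa using by omega)]
        simp [hi]
      · rw [if_neg h, if_neg (by simpa using by omega)]
    · rw [dif_neg (by omega), dif_pos hi, amat_zero_apply, zero_add]
      rcases eq_or_ne ((i:ℕ)+(j:ℕ)) (k+1) with h | h
      · rw [if_pos h, if_pos (by simpa using by omega)]
        show ((k+1).choose (i:ℕ) : ℝ) = (k.choose ((i:ℕ)-1) : ℝ)
        rw [show (i:ℕ) = k+1 from by omega]
        simp
      · rw [if_neg h, if_neg (by simpa using by omega)]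
    · rw [dif_pos hj, dif_pos hi, amat_zero_apply, amat_zero_apply]
      rcases eq_or_ne ((i:ℕ)+(j:ℕ)) (k+1) with h | h
      · rw [if_pos h, if_pos (by simpa using by omega), if_pos (by simpa using by omega)]
        show ((k+1).choose (i:ℕ) : ℝ) = (k.choose (i:ℕ) : ℝ) + (k.choose ((i:ℕ)-1) : ℝ)
        obtain ⟨m, hm⟩ : ∃ m, (i:ℕ) = m+1 := ⟨(i:ℕ)-1, by omega⟩
        rw [hm]
        simp [Nat.choose_succ_succ']
        push_cast
        ring
      · rw [if_neg h, if_neg (by simpa using by omega), if_neg (by simpa using by omega),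
          add_zero]
  refine ⟨h1, ?_, ?_⟩
  · intro k
    induction k with
    | zero => simp
    | succ k ih =>
      rw [h1 k, ih, Matrix.sum_mul, Matrix.mul_sum]
      have e1 : ∀ j ∈ Finset.range (k+1),
          (k.choose j : ℝ) • (((Sh q)ᵀ)^j * Amat q r 0 0 * (Sh r)^(k-j)) * Sh r
            = (k.choose j : ℝ) • (((Sh q)ᵀ)^j * Amat q r 0 0 * (Sh r)^((k+1)-j)) := by
        intro j hj
        rw [Finset.mem_range] at hj
        rw [Matrix.smul_mul, Matrix.mul_assoc, ← pow_succ,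
          show k - j + 1 = (k+1) - j by omega]
      have e2 : ∀ j ∈ Finset.range (k+1),
          (Sh q)ᵀ * ((k.choose j : ℝ) • (((Sh q)ᵀ)^j * Amat q r 0 0 * (Sh r)^(k-j)))
            = (k.choose j : ℝ) • (((Sh q)ᵀ)^(j+1) * Amat q r 0 0 * (Sh r)^((k+1)-(j+1))) := by
        intro j hj
        rw [Finset.mem_range] at hj
        rw [Matrix.mul_smul, ← Matrix.mul_assoc, ← Matrix.mul_assoc, ← pow_succ',
          show (k+1) - (j+1) = k - j by omega]
      rw [Finset.sum_congr rfl e1, Finset.sum_congr rfl e2]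
      rw [Finset.sum_range_succ' (fun j => ((k+1).choose j : ℝ) •
        (((Sh q)ᵀ)^j * Amat q r 0 0 * (Sh r)^((k+1)-j))) (k+1)]
      have e3 : ∀ j ∈ Finset.range (k+1),
          (((k+1).choose (j+1) : ℝ)) • (((Sh q)ᵀ)^(j+1) * Amat q r 0 0 * (Sh r)^((k+1)-(j+1)))
            = (k.choose j : ℝ) • (((Sh q)ᵀ)^(j+1) * Amat q r 0 0 * (Sh r)^((k+1)-(j+1)))
              + (k.choose (j+1) : ℝ) •
                (((Sh q)ᵀ)^(j+1) * Amat q r 0 0 * (Sh r)^((k+1)-(j+1))) := by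
        intro j hj
        rw [Nat.choose_succ_succ', ← add_smul]
        push_cast
        ring_nf
      rw [Finset.sum_congr rfl e3, Finset.sum_add_distrib]
      have e4 : ∑ j ∈ Finset.range (k+1), (k.choose (j+1) : ℝ) •
            (((Sh q)ᵀ)^(j+1) * Amat q r 0 0 * (Sh r)^((k+1)-(j+1)))
          + ((k.choose 0 : ℝ)) • (((Sh q)ᵀ)^0 * Amat q r 0 0 * (Sh r)^((k+1)-0))
          = ∑ j ∈ Finset.range (k+2), (k.choose j : ℝ) •
            (((Sh q)ᵀ)^j * Amat q r 0 0 * (Sh r)^((k+1)-j)) := by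
        rw [Finset.sum_range_succ' (fun j => (k.choose j : ℝ) •
          (((Sh q)ᵀ)^j * Amat q r 0 0 * (Sh r)^((k+1)-j))) (k+1)]
      have e5 : ∑ j ∈ Finset.range (k+2), (k.choose j : ℝ) •
            (((Sh q)ᵀ)^j * Amat q r 0 0 * (Sh r)^((k+1)-j))
          = ∑ j ∈ Finset.range (k+1), (k.choose j : ℝ) •
            (((Sh q)ᵀ)^j * Amat q r 0 0 * (Sh r)^((k+1)-j)) := by
        rw [Finset.sum_range_succ]
        simp [Nat.choose_succ_self]
      rw [add_comm]
      rw [show ((k+1).choose 0 : ℝ) = (k.choose 0 : ℝ) by simp]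
      rw [add_assoc, e4, e5]
  · intro z k
    ext i j
    rw [Matrix.sum_apply]
    have e : ∀ j' ∈ Finset.range (k+1),
        (((k.choose j' : ℝ) * z ^ (k - j')) • Amat q r j' 0) i j
          = if (i:ℕ)+(j:ℕ) = j' then (k.choose j' : ℝ) * z ^ (k - j') * (j'.choose i : ℝ)
            else 0 := by
      intro j' _
      rw [Matrix.smul_apply, amat_zero_apply, smul_eq_mul, mul_ite, mul_zero]
    rw [Finset.sum_congr rfl e, Finset.sum_ite_eq (Finset.range (k+1)) ((i:ℕ)+(j:ℕ))]
    simp only [Finset.mem_range]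
    simp only [Amat, Matrix.of_apply]
    rcases le_or_gt ((i:ℕ)+(j:ℕ)) k with hle | hlt
    · rw [if_pos hle, if_pos (by omega)]
      have := Nat.choose_mul (n := k) (k := (i:ℕ)+(j:ℕ)) (s := (i:ℕ)) (by omega)
      rw [Nat.add_sub_cancel_left] at this
      have hcast : (k.choose ((i:ℕ)+(j:ℕ)) : ℝ) * (((i:ℕ)+(j:ℕ)).choose i : ℝ)
          = (k.choose i : ℝ) * ((k - (i:ℕ)).choose j : ℝ) := by
        exact_mod_cast congrArg (Nat.cast : ℕ → ℝ) this
      rw [show k - ((i:ℕ)+(j:ℕ)) = k - (i:ℕ) - (j:ℕ) by omega]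
      linear_combination -z ^ (k - (i:ℕ) - (j:ℕ)) * hcast
    · rw [if_neg (by omega), if_neg (by omega)]
end
end

section
/- For every z ∈ ℝ the factorization 𝒜(z) = 𝓛_{μ,q}(z) · Ā · 𝓛_{ν,r}(z)^T holds. In particular 𝒜(0) = 𝓛_{μ,q}(0) · Ā · 𝓛_{ν,r}(0)^T, and if μq = νr then det 𝒜(z) = det Ā for all z. -/
open Matrix Kronecker

noncomputable section

namespace Statement1Aux

open Finset

/-! ### Combinatorial lemmas -/

lemma sum_range_eq_sum_range {M : Type*} [AddCommMonoid M] {f : ℕ → M} {m n : ℕ}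
    (h : ∀ t, f t ≠ 0 → t < m ∧ t < n) :
    ∑ t ∈ range m, f t = ∑ t ∈ range n, f t := by
  have h1 : ∑ t ∈ range (min m n), f t = ∑ t ∈ range m, f t := by
    apply Finset.sum_subset (Finset.range_subset_range.2 (min_le_left m n))
    intro x hx hnx
    by_contra hfx
    exact hnx (Finset.mem_range.2 (lt_min (h x hfx).1 (h x hfx).2))
  have h2 : ∑ t ∈ range (min m n), f t = ∑ t ∈ range n, f t := by
    apply Finset.sum_subset (Finset.range_subset_range.2 (min_le_right m n))
    intro x hx hnx
    by_contra hfx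
    exact hnx (Finset.mem_range.2 (lt_min (h x hfx).1 (h x hfx).2))
  rw [← h1, h2]

lemma symm_choose (n a b : ℕ) :
    n.choose a * (n - a).choose b = n.choose b * (n - b).choose a := by
  rcases le_or_gt (a + b) n with hab | hab
  · have key : ∀ x y : ℕ, x + y ≤ n →
        (n.choose x * (n - x).choose y) * (x.factorial * y.factorial * (n - x - y).factorial)
          = n.factorial := by
      intro x y hxy
      have hx : x ≤ n := le_trans (Nat.le_add_right x y) hxy
      have hy : y ≤ n - x := by omega
      calc (n.choose x * (n - x).choose y) * (x.factorial * y.factorial * (n - x - y).factorial)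
          = (n.choose x * x.factorial) * ((n - x).choose y * y.factorial * (n - x - y).factorial) := by ring
        _ = (n.choose x * x.factorial) * (n - x).factorial := by
              rw [Nat.choose_mul_factorial_mul_factorial hy]
        _ = n.factorial := by
              have := Nat.choose_mul_factorial_mul_factorial hx
              calc n.choose x * x.factorial * (n - x).factorial
                  = n.choose x * x.factorial * (n-x).factorial := rfl
                _ = n.factorial := by rw [mul_assoc] at this ⊢; exact this
    have h1 := key a b hab
    have h2 := key b a (by omega)
    have hfac : 0 < a.factorial * b.factorial * (n - a - b).factorial :=
      Nat.mul_pos (Nat.mul_pos a.factorial_pos b.factorial_pos) (n-a-b).factorial_pos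
    have h2' : (n.choose b * (n - b).choose a) * (a.factorial * b.factorial * (n - a - b).factorial) = n.factorial := by
      have : n - b - a = n - a - b := by omega
      rw [this] at h2; rw [← h2]; ring
    exact Nat.eq_of_mul_eq_mul_right hfac (h1.trans h2'.symm)
  · rcases le_or_gt a n with ha | ha
    · rcases le_or_gt b n with hb | hb
      · rw [Nat.choose_eq_zero_of_lt (show n - a < b by omega),
            Nat.choose_eq_zero_of_lt (show n - b < a by omega)]
        ring
      · rw [Nat.choose_eq_zero_of_lt hb, Nat.choose_eq_zero_of_lt (show n - a < b by omega)]
        ring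
    · rw [Nat.choose_eq_zero_of_lt ha]
      rcases le_or_gt b n with hb | hb
      · rw [Nat.choose_eq_zero_of_lt (show n - b < a by omega)]; ring
      · rw [Nat.choose_eq_zero_of_lt hb]; ring

lemma vander' (m n a : ℕ) :
    ∑ t ∈ range (a+1), m.choose t * n.choose (a-t) = (m+n).choose a := by
  rw [Nat.add_choose_eq, Finset.Nat.sum_antidiagonal_eq_sum_range_succ_mk]
lemma keyNat (i j a b : ℕ) :
    (∑ i' ∈ range (i+1), ∑ j' ∈ range (j+1),
      if j' ≤ a ∧ i' ≤ b then
        i.choose i' * (i - i').choose (a - j') * j.choose j' * (j - j').choose (b - i')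
      else 0)
    = (i+j).choose a * ((i+j) - a).choose b := by
  have step1 : ∀ i' : ℕ,
      (∑ j' ∈ range (j+1),
        if j' ≤ a ∧ i' ≤ b then
          i.choose i' * (i - i').choose (a - j') * j.choose j' * (j - j').choose (b - i')
        else 0)
      = if i' ≤ b then
          i.choose i' * j.choose (b - i') * ((j - (b - i')) + (i - i')).choose a
        else 0 := by
    intro i'
    by_cases hib : i' ≤ b
    · simp only [hib, and_true, if_true]
      have hterm : ∀ j' : ℕ,
          (if j' ≤ a then
            i.choose i' * (i - i').choose (a - j') * j.choose j' * (j - j').choose (b - i')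
          else 0)
          = i.choose i' * j.choose (b - i') *
              (if j' ≤ a then (j - (b - i')).choose j' * (i - i').choose (a - j') else 0) := by
        intro j'
        by_cases hja : j' ≤ a
        · simp only [hja, if_true]
          have := symm_choose j j' (b - i')
          calc i.choose i' * (i - i').choose (a - j') * j.choose j' * (j - j').choose (b - i')
              = i.choose i' * (i - i').choose (a - j') * (j.choose j' * (j - j').choose (b - i')) := by ring
            _ = i.choose i' * (i - i').choose (a - j') * (j.choose (b - i') * (j - (b - i')).choose j') := by rw [this]
            _ = i.choose i' * j.choose (b - i') * ((j - (b - i')).choose j' * (i - i').choose (a - j')) := by ring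
        · simp [hja]
      rw [Finset.sum_congr rfl (fun j' _ => hterm j'), ← Finset.mul_sum]
      congr 1
      have hrange : (∑ j' ∈ range (j+1),
          if j' ≤ a then (j - (b - i')).choose j' * (i - i').choose (a - j') else 0)
          = ∑ j' ∈ range (a+1),
          if j' ≤ a then (j - (b - i')).choose j' * (i - i').choose (a - j') else 0 := by
        apply sum_range_eq_sum_range
        intro t ht
        constructor
        · by_contra h
          have : ¬ (j - (b - i')).choose t ≠ 0 := by
            simp only [ne_eq, not_not, Nat.choose_eq_zero_iff]; omega
          simp only [ne_eq, ite_eq_right_iff, not_forall] at ht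
          rcases ht with ⟨-, ht⟩
          exact this (by intro h0; exact ht (by rw [h0, zero_mul]))
        · simp only [ne_eq, ite_eq_right_iff, not_forall] at ht
          obtain ⟨h1, -⟩ := ht
          omega
      rw [hrange, Finset.sum_congr rfl
        (fun t htm => if_pos (by have := Finset.mem_range.mp htm; omega : t ≤ a)), vander' (j - (b - i')) (i - i') a]
    · simp [hib]
  rw [Finset.sum_congr rfl (fun i' _ => step1 i')]
  have step2 : ∀ i' ∈ range (i+1),
      (if i' ≤ b then
        i.choose i' * j.choose (b - i') * ((j - (b - i')) + (i - i')).choose a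
      else 0)
      = (if i' ≤ b then i.choose i' * j.choose (b - i') else 0) * ((i+j) - b).choose a := by
    intro i' hi'
    have hii : i' ≤ i := by simpa using Nat.lt_succ_iff.mp (mem_range.mp hi')
    by_cases hib : i' ≤ b
    · simp only [hib, if_true]
      by_cases hbj : b - i' ≤ j
      · have : (j - (b - i')) + (i - i') = (i+j) - b := by omega
        rw [this]
      · rw [Nat.choose_eq_zero_of_lt (by omega : j < b - i')]; ring
    · simp [hib]
  rw [Finset.sum_congr rfl step2, ← Finset.sum_mul]
  have hrange2 : (∑ i' ∈ range (i+1), if i' ≤ b then i.choose i' * j.choose (b - i') else 0)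
      = ∑ i' ∈ range (b+1), if i' ≤ b then i.choose i' * j.choose (b - i') else 0 := by
    apply sum_range_eq_sum_range
    intro t ht
    simp only [ne_eq, ite_eq_right_iff, not_forall] at ht
    rcases ht with ⟨h1, h2⟩
    constructor
    · have : i.choose t ≠ 0 := fun h0 => h2 (by rw [h0, zero_mul])
      rw [ne_eq, Nat.choose_eq_zero_iff] at this; omega
    · omega
  rw [hrange2, Finset.sum_congr rfl (fun t htm => if_pos (by simpa using Nat.lt_succ_iff.mp (mem_range.mp htm))), vander' i j b]
  calc (i+j).choose b * ((i+j) - b).choose a = (i+j).choose a * ((i+j) - a).choose b :=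
    symm_choose (i+j) b a
lemma keyR (z : ℝ) (i j a b : ℕ) :
    (∑ j' ∈ range (j+1), ∑ i' ∈ range (i+1),
      (if i' ≤ i ∧ j' ≤ a then
          (i.choose i' : ℝ) * ((i - i').choose (a - j') : ℝ) * z ^ (i - i' - (a - j'))
        else 0) *
      (if j' ≤ j ∧ i' ≤ b then
          (j.choose j' : ℝ) * ((j - j').choose (b - i') : ℝ) * z ^ (j - j' - (b - i'))
        else 0))
    = ((i+j).choose a : ℝ) * (((i+j) - a).choose b : ℝ) * z ^ ((i+j) - a - b) := by
  have hterm : ∀ j' i' : ℕ,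
      (if i' ≤ i ∧ j' ≤ a then
          (i.choose i' : ℝ) * ((i - i').choose (a - j') : ℝ) * z ^ (i - i' - (a - j'))
        else 0) *
      (if j' ≤ j ∧ i' ≤ b then
          (j.choose j' : ℝ) * ((j - j').choose (b - i') : ℝ) * z ^ (j - j' - (b - i'))
        else 0)
      = (if i' ≤ i ∧ j' ≤ a ∧ j' ≤ j ∧ i' ≤ b then
          ((i.choose i' * (i - i').choose (a - j') * j.choose j' * (j - j').choose (b - i') : ℕ) : ℝ)
        else 0) * z ^ ((i+j) - a - b) := by
    intro j' i'
    by_cases h1 : i' ≤ i ∧ j' ≤ a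
    · by_cases h2 : j' ≤ j ∧ i' ≤ b
      · rw [if_pos h1, if_pos h2, if_pos ⟨h1.1, h1.2, h2.1, h2.2⟩]
        set prod := i.choose i' * (i - i').choose (a - j') * j.choose j' * (j - j').choose (b - i') with hprod
        have hl : (i.choose i' : ℝ) * ((i - i').choose (a - j') : ℝ) * z ^ (i - i' - (a - j')) *
            ((j.choose j' : ℝ) * ((j - j').choose (b - i') : ℝ) * z ^ (j - j' - (b - i')))
            = (prod : ℝ) * (z ^ (i - i' - (a - j')) * z ^ (j - j' - (b - i'))) := by
          rw [hprod]; push_cast; ring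
        rw [hl]
        by_cases h0 : prod = 0
        · rw [h0]; simp
        · have hc2 : a - j' ≤ i - i' := by
            by_contra hlt
            have hz : (i - i').choose (a - j') = 0 := Nat.choose_eq_zero_of_lt (by omega)
            exact h0 (by rw [hprod, hz]; ring)
          have hc4 : b - i' ≤ j - j' := by
            by_contra hlt
            have hz : (j - j').choose (b - i') = 0 := Nat.choose_eq_zero_of_lt (by omega)
            exact h0 (by rw [hprod, hz]; ring)
          rw [← pow_add]
          congr 2
          omega
      · rw [if_neg h2, mul_zero, if_neg (fun hc => h2 ⟨hc.2.2.1, hc.2.2.2⟩), zero_mul]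
    · rw [if_neg h1, zero_mul, if_neg (fun hc => h1 ⟨hc.1, hc.2.1⟩), zero_mul]
  rw [Finset.sum_congr rfl fun j' _ => Finset.sum_congr rfl fun i' _ => hterm j' i']
  rw [show (∑ j' ∈ range (j+1), ∑ i' ∈ range (i+1),
      (if i' ≤ i ∧ j' ≤ a ∧ j' ≤ j ∧ i' ≤ b then
          ((i.choose i' * (i - i').choose (a - j') * j.choose j' * (j - j').choose (b - i') : ℕ) : ℝ)
        else 0) * z ^ ((i+j) - a - b))
      = (∑ j' ∈ range (j+1), ∑ i' ∈ range (i+1),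
      (if i' ≤ i ∧ j' ≤ a ∧ j' ≤ j ∧ i' ≤ b then
          ((i.choose i' * (i - i').choose (a - j') * j.choose j' * (j - j').choose (b - i') : ℕ) : ℝ)
        else 0)) * z ^ ((i+j) - a - b) from by
    rw [Finset.sum_mul]
    exact Finset.sum_congr rfl fun j' _ => by rw [Finset.sum_mul]]
  have hS : (∑ j' ∈ range (j+1), ∑ i' ∈ range (i+1),
      (if i' ≤ i ∧ j' ≤ a ∧ j' ≤ j ∧ i' ≤ b then
          ((i.choose i' * (i - i').choose (a - j') * j.choose j' * (j - j').choose (b - i') : ℕ) : ℝ)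
        else 0))
      = ((i+j).choose a : ℝ) * (((i+j) - a).choose b : ℝ) := by
    rw [Finset.sum_comm]
    have hIf : ∀ i' ∈ range (i+1), ∀ j' ∈ range (j+1),
        (if i' ≤ i ∧ j' ≤ a ∧ j' ≤ j ∧ i' ≤ b then
          ((i.choose i' * (i - i').choose (a - j') * j.choose j' * (j - j').choose (b - i') : ℕ) : ℝ)
        else 0)
        = ((if j' ≤ a ∧ i' ≤ b then
            i.choose i' * (i - i').choose (a - j') * j.choose j' * (j - j').choose (b - i')
          else 0 : ℕ) : ℝ) := by
      intro i' hi' j' hj'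
      have h1 : i' ≤ i := by have := Finset.mem_range.mp hi'; omega
      have h2 : j' ≤ j := by have := Finset.mem_range.mp hj'; omega
      by_cases hc : j' ≤ a ∧ i' ≤ b
      · rw [if_pos ⟨h1, hc.1, h2, hc.2⟩, if_pos hc]
      · rw [if_neg (fun hh => hc ⟨hh.2.1, hh.2.2.2⟩), if_neg hc, Nat.cast_zero]
    rw [Finset.sum_congr rfl fun i' hi' => Finset.sum_congr rfl fun j' hj' => hIf i' hi' j' hj']
    rw [show (∑ i' ∈ range (i+1), ∑ j' ∈ range (j+1),
        ((if j' ≤ a ∧ i' ≤ b then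
            i.choose i' * (i - i').choose (a - j') * j.choose j' * (j - j').choose (b - i')
          else 0 : ℕ) : ℝ))
        = ((∑ i' ∈ range (i+1), ∑ j' ∈ range (j+1),
          (if j' ≤ a ∧ i' ≤ b then
            i.choose i' * (i - i').choose (a - j') * j.choose j' * (j - j').choose (b - i')
          else 0) : ℕ) : ℝ) from by push_cast; rfl]
    rw [keyNat i j a b]
    push_cast
    ring
  rw [hS]

lemma sum_fin_delta {n : ℕ} (c : ℕ) (g : ℕ → ℝ) :
    (∑ x : Fin n, if (x : ℕ) = c then g (x : ℕ) else 0) = if c < n then g c else 0 := by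
  rw [Fin.sum_univ_eq_sum_range (fun t => if t = c then g t else 0) n,
    Finset.sum_ite_eq' (range n) c g]
  simp [Finset.mem_range]

lemma Sh_pow (k t : ℕ) (x y : Fin k) :
    ((Sh k) ^ t) x y = if (x : ℕ) + t = (y : ℕ) then 1 else 0 := by
  induction t generalizing y with
  | zero =>
    rw [pow_zero, Matrix.one_apply]
    simp [Fin.ext_iff, eq_comm]
  | succ t ih =>
    rw [pow_succ, Matrix.mul_apply]
    have hterm : ∀ c : Fin k, ((Sh k) ^ t) x c * Sh k c y
        = if (c : ℕ) = (x : ℕ) + t then (if (c : ℕ) + 1 = (y : ℕ) then 1 else 0) else 0 := by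
      intro c
      rw [ih c]
      show (if (x : ℕ) + t = (c : ℕ) then (1:ℝ) else 0) *
          (if (c : ℕ) + 1 = (y : ℕ) then 1 else 0) = _
      by_cases hA : (x : ℕ) + t = (c : ℕ)
      · rw [if_pos hA, if_pos hA.symm, one_mul]
      · rw [if_neg hA, zero_mul,
          if_neg (show ¬(c : ℕ) = (x : ℕ) + t from fun h => hA h.symm)]
    rw [Finset.sum_congr rfl fun c _ => hterm c,
      sum_fin_delta ((x : ℕ) + t) (fun m => if m + 1 = (y : ℕ) then 1 else 0)]
    have hy := y.isLt
    by_cases hxy : (x : ℕ) + (t + 1) = (y : ℕ)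
    · rw [if_pos (by omega : (x : ℕ) + t < k), if_pos (by omega : (x : ℕ) + t + 1 = (y : ℕ)),
        if_pos hxy]
    · rw [if_neg hxy]
      by_cases hk : (x : ℕ) + t < k
      · rw [if_pos hk, if_neg (by omega)]
      · rw [if_neg hk]

lemma Jmat_pow (k : ℕ) (z : ℝ) (n : ℕ) (a c : Fin k) :
    ((Jmat k z) ^ n) a c =
      if (c : ℕ) ≤ (a : ℕ) then
        (n.choose ((a : ℕ) - (c : ℕ)) : ℝ) * z ^ (n - ((a : ℕ) - (c : ℕ)))
      else 0 := by
  have hcomm : Commute (z • (1 : Matrix (Fin k) (Fin k) ℝ)) ((Sh k)ᵀ) := by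
    unfold Commute SemiconjBy
    rw [Matrix.smul_mul, Matrix.mul_smul, one_mul, mul_one]
  rw [Jmat, hcomm.add_pow n, Matrix.sum_apply]
  have hterm : ∀ t ∈ range (n+1),
      ((z • (1 : Matrix (Fin k) (Fin k) ℝ)) ^ t * (Sh k)ᵀ ^ (n - t) * (n.choose t : ℕ)) a c
      = if (c : ℕ) + (n - t) = (a : ℕ) then z ^ t * (n.choose t : ℝ) else 0 := by
    intro t _
    rw [← Matrix.diagonal_natCast, Matrix.mul_diagonal, smul_pow, one_pow,
      Matrix.smul_mul, Matrix.one_mul, Matrix.smul_apply, ← Matrix.transpose_pow,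
      Matrix.transpose_apply, Sh_pow]
    split_ifs with hcond
    · simp [mul_comm]
    · simp
  rw [Finset.sum_congr rfl hterm]
  rcases le_or_gt (c : ℕ) (a : ℕ) with hca | hca
  · rcases le_or_gt ((a : ℕ) - (c : ℕ)) n with hacn | hacn
    · rw [Finset.sum_eq_single_of_mem (n - ((a : ℕ) - (c : ℕ)))
        (Finset.mem_range.2 (by omega))]
      · rw [if_pos (by omega), if_pos hca, Nat.choose_symm hacn, mul_comm]
      · intro t ht hne
        rw [if_neg (by have := Finset.mem_range.mp ht; omega)]
    · rw [Finset.sum_eq_zero, if_pos hca,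
        Nat.choose_eq_zero_of_lt (by omega), Nat.cast_zero, zero_mul]
      intro t ht
      rw [if_neg (by have := Finset.mem_range.mp ht; omega)]
  · rw [Finset.sum_eq_zero, if_neg (by omega)]
    intro t ht
    rw [if_neg (by omega)]

def Lent (z : ℝ) (i a i' a' : ℕ) : ℝ :=
  if i' ≤ i ∧ a' ≤ a then
    (i.choose i' : ℝ) * ((i - i').choose (a - a') : ℝ) * z ^ (i - i' - (a - a'))
  else 0

lemma Lmat_apply (m k : ℕ) (z : ℝ) (p p' : Fin m × Fin k) :
    Lmat m k z p p' = Lent z p.1 p.2 p'.1 p'.2 := by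
  show (if (p'.1 : ℕ) ≤ (p.1 : ℕ) then
      (Nat.choose p.1 p'.1 : ℝ) * ((Jmat k z) ^ ((p.1 : ℕ) - (p'.1 : ℕ))) p.2 p'.2
    else 0) = _
  rw [Jmat_pow, Lent]
  split_ifs <;> first | ring1 | (exfalso; omega)

lemma Abar_apply (q r μ ν : ℕ) (x : Fin μ × Fin q) (y : Fin ν × Fin r) :
    Abar q r μ ν x y = if (x.2 : ℕ) = (y.1 : ℕ) ∧ (y.2 : ℕ) = (x.1 : ℕ) then 1 else 0 := by
  show (((Sh q)ᵀ) ^ (y.1 : ℕ) * A0 q r * (Sh r) ^ (x.1 : ℕ)) x.2 y.2 = _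
  rw [Matrix.mul_apply]
  have hterm : ∀ d : Fin r,
      (((Sh q)ᵀ) ^ (y.1 : ℕ) * A0 q r) x.2 d * ((Sh r) ^ (x.1 : ℕ)) d y.2
      = if (d : ℕ) = 0 then
          (if (y.1 : ℕ) = (x.2 : ℕ) then 1 else 0) *
          (if (x.1 : ℕ) = (y.2 : ℕ) then 1 else 0)
        else 0 := by
    intro d
    rw [Matrix.mul_apply, Sh_pow]
    have hinner : ∀ c : Fin q,
        (((Sh q)ᵀ) ^ (y.1 : ℕ)) x.2 c * A0 q r c d
        = if (c : ℕ) = 0 then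
            (if (c : ℕ) + (y.1 : ℕ) = (x.2 : ℕ) then 1 else 0) *
            (if (d : ℕ) = 0 then 1 else 0)
          else 0 := by
      intro c
      rw [← Matrix.transpose_pow, Matrix.transpose_apply, Sh_pow]
      show (if (c : ℕ) + (y.1 : ℕ) = (x.2 : ℕ) then (1:ℝ) else 0) *
          (if (c : ℕ) = 0 ∧ (d : ℕ) = 0 then (1:ℝ) else 0) = _
      split_ifs <;> first | ring1 | (exfalso; omega)
    rw [Finset.sum_congr rfl fun c _ => hinner c,
      sum_fin_delta 0 (fun m => (if m + (y.1 : ℕ) = (x.2 : ℕ) then (1:ℝ) else 0) *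
        (if (d : ℕ) = 0 then 1 else 0)),
      if_pos x.2.pos]
    by_cases hd : (d : ℕ) = 0
    · rw [if_pos hd, if_pos hd, hd]
      simp
    · simp only [if_neg hd]
      ring
  rw [Finset.sum_congr rfl fun d _ => hterm d,
    sum_fin_delta 0 (fun _ => (if (y.1 : ℕ) = (x.2 : ℕ) then (1:ℝ) else 0) *
      (if (x.1 : ℕ) = (y.2 : ℕ) then 1 else 0)),
    if_pos y.2.pos]
  split_ifs <;> first | ring1 | (exfalso; omega)

lemma Amat_eq (q r k : ℕ) (z : ℝ) (a : Fin q) (b : Fin r) :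
    Amat q r k z a b
      = (k.choose (a : ℕ) : ℝ) * ((k - (a : ℕ)).choose (b : ℕ) : ℝ) * z ^ (k - (a : ℕ) - (b : ℕ)) := by
  show (if (a : ℕ) + (b : ℕ) ≤ k then
      (Nat.choose k a : ℝ) * (Nat.choose (k - a) b : ℝ) * z ^ (k - a - b) else 0) = _
  split_ifs with h
  · rfl
  · rcases le_or_gt (a : ℕ) k with h1 | h1
    · rw [Nat.choose_eq_zero_of_lt (show k - (a : ℕ) < (b : ℕ) by omega), Nat.cast_zero]
      ring
    · rw [Nat.choose_eq_zero_of_lt h1, Nat.cast_zero]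
      ring

lemma mulAbar (q r μ ν : ℕ) (z : ℝ) (p : Fin μ × Fin q) (y : Fin ν × Fin r) :
    (Lmat μ q z * Abar q r μ ν) p y
      = if (y.1 : ℕ) < q ∧ (y.2 : ℕ) < μ then Lent z p.1 p.2 y.2 y.1 else 0 := by
  rw [Matrix.mul_apply]
  have hterm : ∀ x : Fin μ × Fin q, Lmat μ q z p x * Abar q r μ ν x y
      = if (x.2 : ℕ) = (y.1 : ℕ) then
          (if (x.1 : ℕ) = (y.2 : ℕ) then Lent z p.1 p.2 x.1 x.2 else 0)
        else 0 := by
    intro x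
    rw [Lmat_apply, Abar_apply]
    by_cases h1 : (x.2 : ℕ) = (y.1 : ℕ)
    · by_cases h2 : (x.1 : ℕ) = (y.2 : ℕ)
      · rw [if_pos ⟨h1, h2.symm⟩, mul_one, if_pos h1, if_pos h2]
      · rw [if_neg (fun hc => h2 hc.2.symm), mul_zero, if_pos h1, if_neg h2]
    · rw [if_neg (fun hc => h1 hc.1), mul_zero, if_neg h1]
  rw [Finset.sum_congr rfl fun x _ => hterm x, Fintype.sum_prod_type]
  have hinner : ∀ x1 : Fin μ,
      (∑ x2 : Fin q, if (x2 : ℕ) = (y.1 : ℕ) then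
          (if (x1 : ℕ) = (y.2 : ℕ) then Lent z p.1 p.2 x1 x2 else 0)
        else 0)
      = if (y.1 : ℕ) < q then
          (if (x1 : ℕ) = (y.2 : ℕ) then Lent z p.1 p.2 x1 (y.1 : ℕ) else 0)
        else 0 := by
    intro x1
    exact sum_fin_delta (y.1 : ℕ)
      (fun m => if (x1 : ℕ) = (y.2 : ℕ) then Lent z p.1 p.2 x1 m else 0)
  rw [Finset.sum_congr rfl fun x1 _ => hinner x1]
  by_cases hy1 : (y.1 : ℕ) < q
  · simp only [if_pos hy1]
    rw [sum_fin_delta (y.2 : ℕ) (fun m => Lent z p.1 p.2 m (y.1 : ℕ))]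
    split_ifs with h1 h2 h2 <;> first | rfl | (exfalso; omega)
  · simp only [if_neg hy1, Finset.sum_const_zero]
    rw [if_neg (fun hc => hy1 hc.1)]

lemma factor (q r μ ν : ℕ) (z : ℝ) :
    Acal q r μ ν z = Lmat μ q z * Abar q r μ ν * (Lmat ν r z)ᵀ := by
  ext p p'
  rw [Matrix.mul_apply]
  have hterm : ∀ y : Fin ν × Fin r,
      (Lmat μ q z * Abar q r μ ν) p y * (Lmat ν r z)ᵀ y p'
      = Lent z p.1 p.2 y.2 y.1 * Lent z p'.1 p'.2 y.1 y.2 := by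
    intro y
    rw [Matrix.transpose_apply, mulAbar, Lmat_apply]
    by_cases hg : (y.1 : ℕ) < q ∧ (y.2 : ℕ) < μ
    · rw [if_pos hg]
    · rw [if_neg hg]
      have hz : Lent z p.1 p.2 y.2 y.1 = 0 := by
        rw [Lent, if_neg]
        intro hc
        exact hg ⟨lt_of_le_of_lt hc.2 p.2.isLt, lt_of_le_of_lt hc.1 p.1.isLt⟩
      rw [hz, zero_mul]
  rw [Finset.sum_congr rfl fun y _ => hterm y, Fintype.sum_prod_type]
  have hin : ∀ y1 : Fin ν,
      (∑ y2 : Fin r, Lent z p.1 p.2 y2 y1 * Lent z p'.1 p'.2 y1 y2)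
      = ∑ t2 ∈ range r, Lent z p.1 p.2 t2 (y1 : ℕ) * Lent z p'.1 p'.2 (y1 : ℕ) t2 :=
    fun y1 => Fin.sum_univ_eq_sum_range
      (fun t2 => Lent z p.1 p.2 t2 (y1 : ℕ) * Lent z p'.1 p'.2 (y1 : ℕ) t2) r
  rw [Finset.sum_congr rfl fun y1 _ => hin y1,
    Fin.sum_univ_eq_sum_range
      (fun t1 => ∑ t2 ∈ range r, Lent z p.1 p.2 t2 t1 * Lent z p'.1 p'.2 t1 t2) ν]
  have houter : (∑ t1 ∈ range ν, ∑ t2 ∈ range r,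
        Lent z p.1 p.2 t2 t1 * Lent z p'.1 p'.2 t1 t2)
      = ∑ t1 ∈ range ((p'.1 : ℕ) + 1), ∑ t2 ∈ range r,
        Lent z p.1 p.2 t2 t1 * Lent z p'.1 p'.2 t1 t2 := by
    apply sum_range_eq_sum_range
    intro t1 ht1
    have ht1' : t1 ≤ (p'.1 : ℕ) := by
      by_contra hgt
      apply ht1
      apply Finset.sum_eq_zero
      intro t2 _
      have : Lent z p'.1 p'.2 t1 t2 = 0 := by
        rw [Lent, if_neg (fun hc => hgt hc.1)]
      rw [this, mul_zero]
    exact ⟨lt_of_le_of_lt ht1' p'.1.isLt, by omega⟩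
  rw [houter]
  have hinner2 : ∀ t1 ∈ range ((p'.1 : ℕ) + 1),
      (∑ t2 ∈ range r, Lent z p.1 p.2 t2 t1 * Lent z p'.1 p'.2 t1 t2)
      = ∑ t2 ∈ range ((p.1 : ℕ) + 1), Lent z p.1 p.2 t2 t1 * Lent z p'.1 p'.2 t1 t2 := by
    intro t1 _
    apply sum_range_eq_sum_range
    intro t2 ht2
    constructor
    · by_contra hge
      apply ht2
      have : Lent z p'.1 p'.2 t1 t2 = 0 := by
        rw [Lent, if_neg (fun hc => hge (lt_of_le_of_lt hc.2 p'.2.isLt))]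
      rw [this, mul_zero]
    · by_contra hge
      apply ht2
      have : Lent z p.1 p.2 t2 t1 = 0 := by
        rw [Lent, if_neg (fun hc => hge (by omega))]
      rw [this, zero_mul]
  rw [Finset.sum_congr rfl hinner2]
  show Amat q r ((p.1 : ℕ) + (p'.1 : ℕ)) z p.2 p'.2 = _
  rw [Amat_eq]
  simp only [Lent]
  exact (keyR z (p.1 : ℕ) (p'.1 : ℕ) (p.2 : ℕ) (p'.2 : ℕ)).symm

lemma Lent_diag (z : ℝ) (i a : ℕ) : Lent z i a i a = 1 := by
  rw [Lent, if_pos ⟨le_refl _, le_refl _⟩]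
  simp

lemma det_Lmat_submatrix (m k N : ℕ) (z : ℝ) (e : Fin N ≃ Fin m × Fin k)
    (he : ∀ x : Fin N, (x : ℕ) = ((e x).2 : ℕ) + k * ((e x).1 : ℕ)) :
    ((Lmat m k z).submatrix ⇑e ⇑e).det = 1 := by
  have htri : ((Lmat m k z).submatrix ⇑e ⇑e).BlockTriangular OrderDual.toDual := by
    intro x y hxy
    have hlt : x < y := hxy
    show Lmat m k z (e x) (e y) = 0
    rw [Lmat_apply, Lent, if_neg]
    intro hc
    have hle : (y : ℕ) ≤ (x : ℕ) := by
      rw [he x, he y]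
      exact Nat.add_le_add hc.2 (Nat.mul_le_mul_left k hc.1)
    have hlt' : (x : ℕ) < (y : ℕ) := hlt
    omega
  rw [Matrix.det_of_lowerTriangular _ htri]
  apply Finset.prod_eq_one
  intro x _
  show Lmat m k z (e x) (e x) = 1
  rw [Lmat_apply, Lent_diag]

lemma bIdx_val (m n : ℕ) (x : Fin (m * n)) :
    (x : ℕ) = ((bIdx m n x).2 : ℕ) + n * ((bIdx m n x).1 : ℕ) := by
  have h1 : finProdFinEquiv (bIdx m n x) = x := Equiv.apply_symm_apply _ x
  calc (x : ℕ) = ((finProdFinEquiv (bIdx m n x) : Fin (m * n)) : ℕ) := by rw [h1]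
    _ = _ := rfl

end Statement1Aux

theorem statement1 (q r μ ν : ℕ) (hq : 0 < q) (hr : 0 < r) (hμ : 0 < μ) (hν : 0 < ν) :
    (∀ z : ℝ, Acal q r μ ν z = Lmat μ q z * Abar q r μ ν * (Lmat ν r z)ᵀ) ∧
    (Acal q r μ ν 0 = Lmat μ q 0 * Abar q r μ ν * (Lmat ν r 0)ᵀ) ∧
    (∀ (h : μ * q = ν * r) (z : ℝ),
      ((Acal q r μ ν z).submatrix (bIdx μ q) (fun x => bIdx ν r (Fin.cast h x))).det =
      ((Abar q r μ ν).submatrix (bIdx μ q) (fun x => bIdx ν r (Fin.cast h x))).det) := by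
  refine ⟨Statement1Aux.factor q r μ ν, Statement1Aux.factor q r μ ν 0, ?_⟩
  intro h z
  rw [Statement1Aux.factor q r μ ν z]
  set e1 : Fin (μ*q) ≃ Fin μ × Fin q := finProdFinEquiv.symm with he1
  set e2 : Fin (μ*q) ≃ Fin ν × Fin r := (finCongr h).trans finProdFinEquiv.symm with he2
  have hb1 : (bIdx μ q) = ⇑e1 := rfl
  have hb2 : (fun x => bIdx ν r (Fin.cast h x)) = ⇑e2 := rfl
  rw [hb1, hb2]
  have hsplit : (Lmat μ q z * Abar q r μ ν * (Lmat ν r z)ᵀ).submatrix ⇑e1 ⇑e2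
      = (Lmat μ q z).submatrix ⇑e1 ⇑e1 *
        ((Abar q r μ ν).submatrix ⇑e1 ⇑e2 * ((Lmat ν r z)ᵀ).submatrix ⇑e2 ⇑e2) := by
    rw [Matrix.submatrix_mul_equiv (Abar q r μ ν) ((Lmat ν r z)ᵀ) ⇑e1 e2 ⇑e2,
      Matrix.submatrix_mul_equiv (Lmat μ q z) (Abar q r μ ν * (Lmat ν r z)ᵀ) ⇑e1 e1 ⇑e2,
      Matrix.mul_assoc]
  rw [hsplit, Matrix.det_mul, Matrix.det_mul]
  have hd1 : ((Lmat μ q z).submatrix ⇑e1 ⇑e1).det = 1 :=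
    Statement1Aux.det_Lmat_submatrix μ q (μ*q) z e1 (Statement1Aux.bIdx_val μ q)
  have hd2 : (((Lmat ν r z)ᵀ).submatrix ⇑e2 ⇑e2).det = 1 := by
    rw [← Matrix.transpose_submatrix, Matrix.det_transpose]
    refine Statement1Aux.det_Lmat_submatrix ν r (μ*q) z e2 (fun x => ?_)
    have := Statement1Aux.bIdx_val ν r (finCongr h x)
    exact this
  rw [hd1, hd2, one_mul, mul_one]
end
end

section
/- For every z ∈ ℝ the factorization 𝓜(z) = (I_μ ⊗ U_q(z)) · 𝒜(0) · (I_ν ⊗ W_r(z)) holds, where ⊗ denotes the Kronecker product. Consequently, for every z the rank of 𝓜(z) equals the rank of 𝒜(0), namely min{μ,r}·min{ν,q}. -/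
open Matrix Kronecker

noncomputable section

section AuxProofs
open Finset

lemma iteratedDeriv_cmul (n : ℕ) (c : ℝ) (f : ℝ → ℝ) (hf : ContDiff ℝ n f) (z : ℝ) :
    iteratedDeriv n (fun t => c * f t) z = c * iteratedDeriv n f z := by
  rw [← iteratedDerivWithin_univ, ← iteratedDerivWithin_univ]
  exact iteratedDerivWithin_const_mul (Set.mem_univ z) uniqueDiffOn_univ c hf.contDiffAt.contDiffWithinAt

lemma idp (n m : ℕ) (z : ℝ) :
    iteratedDeriv n (fun t : ℝ => t ^ m) z = (m.descFactorial n : ℝ) * z ^ (m - n) := by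
  induction n generalizing m z with
  | zero => simp
  | succ n ih =>
    rw [iteratedDeriv_succ']
    cases m with
    | zero =>
      simp only [pow_zero]
      rw [show deriv (fun _ : ℝ => (1:ℝ)) = fun t : ℝ => (0:ℝ) * t ^ 0 by
        funext t; rw [deriv_const]; ring]
      rw [iteratedDeriv_cmul n 0 _ (by fun_prop), ih]
      simp
    | succ m =>
      have hd : deriv (fun t : ℝ => t ^ (m+1)) = fun t : ℝ => ((m:ℝ)+1) * t ^ m := by
        funext t
        rw [deriv_pow_field, Nat.add_sub_cancel]
        push_cast; ring
      rw [hd, iteratedDeriv_cmul n _ _ (by fun_prop), ih]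
      rw [Nat.succ_descFactorial_succ, Nat.succ_sub_succ]
      push_cast
      ring

lemma det_tri {ι : Type*} [Fintype ι] [DecidableEq ι] (M : Matrix ι ι ℝ) (w : ι → ℕ)
    (htri : ∀ p p', w p < w p' → M p p' = 0)
    (hdiag : ∀ p p', w p = w p' → p ≠ p' → M p p' = 0) :
    M.det = ∏ p, M p p := by
  have hbt : M.BlockTriangular (fun p => OrderDual.toDual (w p)) := fun p p' h => htri p p' h
  rw [hbt.det]
  have hblock : ∀ a, (M.toSquareBlock (fun p => OrderDual.toDual (w p)) a).det =
      ∏ x : {p // OrderDual.toDual (w p) = a}, M x.1 x.1 := by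
    intro a
    have : M.toSquareBlock (fun p => OrderDual.toDual (w p)) a =
        Matrix.diagonal (fun x : {p // OrderDual.toDual (w p) = a} => M x.1 x.1) := by
      ext x y
      by_cases hxy : x = y
      · subst hxy; simp [Matrix.toSquareBlock_def, Matrix.diagonal_apply_eq]
      · rw [Matrix.diagonal_apply_ne _ hxy]
        have h1 : x.1 ≠ y.1 := fun h => hxy (Subtype.ext h)
        have hw : w x.1 = w y.1 := by
          have hx := x.2; have hy := y.2
          simpa using hx.trans hy.symm
        exact hdiag _ _ hw h1
    rw [this, Matrix.det_diagonal]
  rw [Finset.prod_congr rfl fun a _ => hblock a]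
  have : ∀ a ∈ (univ : Finset ι).image (fun p => OrderDual.toDual (w p)),
      (∏ x : {p // OrderDual.toDual (w p) = a}, M x.1 x.1)
        = ∏ p ∈ univ.filter (fun p => OrderDual.toDual (w p) = a), M p p := by
    intro a _
    rw [← Finset.prod_subtype (univ.filter (fun p => OrderDual.toDual (w p) = a))
      (fun x => by simp) (fun p => M p p)]
  rw [Finset.prod_congr rfl this]
  exact Finset.prod_fiberwise_of_maps_to (fun x _ => Finset.mem_image_of_mem _ (mem_univ x)) _

lemma Uq_apply (q : ℕ) (z : ℝ) (a c : Fin q) :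
    Uq q z a c = ((a:ℕ).descFactorial (c:ℕ) : ℝ) * z ^ ((a:ℕ) - (c:ℕ)) := idp _ _ _

lemma Wrm_apply (r : ℕ) (z : ℝ) (d b : Fin r) :
    Wrm r z d b = ((b:ℕ).descFactorial (d:ℕ) : ℝ) * z ^ ((b:ℕ) - (d:ℕ)) := idp _ _ _

lemma Mcal_apply (q r μ ν : ℕ) (z : ℝ) (p : Fin μ × Fin q) (p' : Fin ν × Fin r) :
    Mcal q r μ ν z p p' =
      (((p.2:ℕ) + (p'.2:ℕ)).descFactorial ((p.1:ℕ) + (p'.1:ℕ)) : ℝ) *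
        z ^ ((p.2:ℕ) + (p'.2:ℕ) - ((p.1:ℕ) + (p'.1:ℕ))) := idp _ _ _

lemma Amat0_apply (q r k : ℕ) (a : Fin q) (b : Fin r) :
    Amat q r k 0 a b = if (a:ℕ) + (b:ℕ) = k then (k.choose (a:ℕ) : ℝ) else 0 := by
  show (if (a:ℕ) + (b:ℕ) ≤ k then
      (k.choose (a:ℕ) : ℝ) * ((k - (a:ℕ)).choose (b:ℕ) : ℝ) * (0:ℝ) ^ (k - (a:ℕ) - (b:ℕ))
    else 0) = _
  rcases lt_trichotomy ((a:ℕ) + (b:ℕ)) k with h | h | h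
  · rw [if_pos h.le, if_neg h.ne, zero_pow (by omega), mul_zero]
  · rw [if_pos h.le, if_pos h]
    have h1 : k - (a:ℕ) = (b:ℕ) := by omega
    have h2 : k - (a:ℕ) - (b:ℕ) = 0 := by omega
    rw [h1, Nat.choose_self, Nat.sub_self, pow_zero]
    push_cast; ring
  · rw [if_neg (by omega), if_neg (by omega)]

lemma Acal0_apply (q r μ ν : ℕ) (p : Fin μ × Fin q) (p' : Fin ν × Fin r) :
    Acal q r μ ν 0 p p' =
      if (p.2:ℕ) + (p'.2:ℕ) = (p.1:ℕ) + (p'.1:ℕ)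
      then ((((p.1:ℕ) + (p'.1:ℕ))).choose (p.2:ℕ) : ℝ) else 0 :=
  Amat0_apply _ _ _ _ _

lemma key1 (Q R k a b : ℕ) (ha : a < Q) (hb : b < R) (z : ℝ) :
    (∑ c : Fin Q, ∑ d : Fin R,
      (a.descFactorial (c:ℕ) : ℝ) * z ^ (a - (c:ℕ)) *
        ((if (c:ℕ) + (d:ℕ) = k then (k.choose (c:ℕ) : ℝ) else 0) *
          ((b.descFactorial (d:ℕ) : ℝ) * z ^ (b - (d:ℕ)))))
      = ((a + b).descFactorial k : ℝ) * z ^ (a + b - k) := by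
  have hval : ∀ c d : ℕ, c + d = k → c ≤ a → d ≤ b →
      (a.descFactorial c : ℝ) * z ^ (a - c) *
        ((k.choose c : ℝ) * ((b.descFactorial d : ℝ) * z ^ (b - d)))
      = (k.factorial : ℝ) * ((a.choose c : ℝ) * (b.choose d : ℝ)) * z ^ (a + b - k) := by
    intro c d hcd hca hdb
    have hzz : z ^ (a - c) * z ^ (b - d) = z ^ (a + b - k) := by
      rw [← pow_add]; congr 1; omega
    have hnat : c.factorial * k.choose c * d.factorial = k.factorial := by
      have h1 : d = k - c := by omega
      have h2 : c ≤ k := by omega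
      rw [h1, mul_comm c.factorial, mul_assoc]
      exact Nat.choose_mul_factorial_mul_factorial h2 ▸ by
        rw [← mul_assoc]
    rw [Nat.descFactorial_eq_factorial_mul_choose, Nat.descFactorial_eq_factorial_mul_choose]
    push_cast
    have hnat' : (c.factorial : ℝ) * (k.choose c : ℝ) * (d.factorial : ℝ)
        = (k.factorial : ℝ) := by exact_mod_cast hnat
    calc (c.factorial : ℝ) * (a.choose c) * z ^ (a - c) *
          ((k.choose c : ℝ) * ((d.factorial : ℝ) * (b.choose d) * z ^ (b - d)))
        = ((c.factorial : ℝ) * (k.choose c) * (d.factorial : ℝ)) *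
            ((a.choose c : ℝ) * (b.choose d)) * (z ^ (a - c) * z ^ (b - d)) := by ring
      _ = _ := by rw [hnat', hzz]
  rw [Nat.descFactorial_eq_factorial_mul_choose, Nat.add_choose_eq]
  push_cast
  rw [Finset.mul_sum, Finset.sum_mul]
  rw [← Fintype.sum_prod_type']
  refine Finset.sum_bij_ne_zero (fun p _ _ => ((p.1:ℕ), (p.2:ℕ))) ?_ ?_ ?_ ?_
  · intro p h1 h2
    rw [Finset.HasAntidiagonal.mem_antidiagonal]
    by_contra hne
    simp [hne] at h2
  · intro p1 _ _ p2 _ _ h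
    have h1 := congrArg Prod.fst h
    have h2 := congrArg Prod.snd h
    simp only at h1 h2
    exact Prod.ext (Fin.ext h1) (Fin.ext h2)
  · intro p hp hg
    rw [Finset.HasAntidiagonal.mem_antidiagonal] at hp
    have hca : p.1 ≤ a := by
      by_contra hlt
      rw [Nat.choose_eq_zero_of_lt (by omega)] at hg
      simp at hg
    have hdb : p.2 ≤ b := by
      by_contra hlt
      rw [Nat.choose_eq_zero_of_lt (show b < p.2 by omega)] at hg
      simp at hg
    refine ⟨(⟨p.1, by omega⟩, ⟨p.2, by omega⟩), Finset.mem_univ _, ?_, rfl⟩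
    show (a.descFactorial p.1 : ℝ) * z ^ (a - p.1) *
        ((if p.1 + p.2 = k then (k.choose p.1 : ℝ) else 0) *
          ((b.descFactorial p.2 : ℝ) * z ^ (b - p.2))) ≠ 0
    rw [if_pos hp, hval p.1 p.2 hp hca hdb]
    exact hg
  · intro p h1 h2
    have hcd : (p.1:ℕ) + (p.2:ℕ) = k := by
      by_contra hne
      simp [hne] at h2
    have hca : (p.1:ℕ) ≤ a := by
      by_contra hlt
      rw [Nat.descFactorial_eq_zero_iff_lt.mpr (by omega)] at h2
      simp at h2
    have hdb : (p.2:ℕ) ≤ b := by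
      by_contra hlt
      rw [Nat.descFactorial_eq_zero_iff_lt.mpr (show b < (p.2:ℕ) by omega)] at h2
      simp at h2
    rw [if_pos hcd]
    exact hval _ _ hcd hca hdb

lemma kron_one_mul_apply {μ q : ℕ} {n : Type*} [Fintype n]
    (U : Matrix (Fin q) (Fin q) ℝ) (B : Matrix (Fin μ × Fin q) n ℝ)
    (i : Fin μ) (a : Fin q) (y : n) :
    (((1 : Matrix (Fin μ) (Fin μ) ℝ) ⊗ₖ U) * B) (i, a) y
      = ∑ c : Fin q, U a c * B (i, c) y := by
  rw [Matrix.mul_apply, Fintype.sum_prod_type]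
  simp [Matrix.one_apply, ite_mul, zero_mul, Finset.sum_ite_eq]

lemma mul_kron_one_apply {ν r : ℕ} {n : Type*} [Fintype n]
    (W : Matrix (Fin r) (Fin r) ℝ) (B : Matrix n (Fin ν × Fin r) ℝ)
    (y : n) (j : Fin ν) (b : Fin r) :
    (B * ((1 : Matrix (Fin ν) (Fin ν) ℝ) ⊗ₖ W)) y (j, b)
      = ∑ d : Fin r, B y (j, d) * W d b := by
  rw [Matrix.mul_apply, Fintype.sum_prod_type]
  simp [Matrix.one_apply, mul_ite, mul_zero, ite_mul, zero_mul, Finset.sum_ite_eq]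

lemma part1 (q r μ ν : ℕ) (z : ℝ) :
    Mcal q r μ ν z =
      ((1 : Matrix (Fin μ) (Fin μ) ℝ) ⊗ₖ Uq q z) * Acal q r μ ν 0 *
        ((1 : Matrix (Fin ν) (Fin ν) ℝ) ⊗ₖ Wrm r z) := by
  ext p p'
  obtain ⟨i, a⟩ := p
  obtain ⟨j, b⟩ := p'
  rw [mul_kron_one_apply]
  have step : ∀ d : Fin r,
      (((1 : Matrix (Fin μ) (Fin μ) ℝ) ⊗ₖ Uq q z) * Acal q r μ ν 0) (i, a) (j, d)
        = ∑ c : Fin q, Uq q z a c * Acal q r μ ν 0 (i, c) (j, d) :=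
    fun d => kron_one_mul_apply _ _ _ _ _
  calc Mcal q r μ ν z (i, a) (j, b)
      = ∑ c : Fin q, ∑ d : Fin r,
          ((a:ℕ).descFactorial (c:ℕ) : ℝ) * z ^ ((a:ℕ) - (c:ℕ)) *
            ((if (c:ℕ) + (d:ℕ) = (i:ℕ) + (j:ℕ)
                then ((((i:ℕ) + (j:ℕ))).choose (c:ℕ) : ℝ) else 0) *
              (((b:ℕ).descFactorial (d:ℕ) : ℝ) * z ^ ((b:ℕ) - (d:ℕ)))) := by
        rw [Mcal_apply, key1 q r ((i:ℕ)+(j:ℕ)) (a:ℕ) (b:ℕ) a.2 b.2 z]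
    _ = ∑ d : Fin r, (∑ c : Fin q, Uq q z a c * Acal q r μ ν 0 (i, c) (j, d)) * Wrm r z d b := by
        rw [Finset.sum_comm]
        refine Finset.sum_congr rfl fun d _ => ?_
        rw [Finset.sum_mul]
        refine Finset.sum_congr rfl fun c _ => ?_
        rw [Uq_apply, Wrm_apply, Acal0_apply]
        simp only
        ring
    _ = _ := by
        refine Finset.sum_congr rfl fun d _ => ?_
        rw [step d]

/-- Left factor: `X = L₁·Pᵀ` with explicit entries. -/
def Xmat (q r μ ν : ℕ) : Matrix (Fin μ × Fin q) (Fin (min μ r) × Fin (min ν q)) ℝ :=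
  Matrix.of fun p s =>
    if (s.1:ℕ) ≤ (p.1:ℕ) ∧ (p.2:ℕ) = (s.2:ℕ) + ((p.1:ℕ) - (s.1:ℕ))
    then (((p.1:ℕ)).choose ((s.1:ℕ)) : ℝ) else 0

/-- Right factor with explicit entries. -/
def Ymat (q r μ ν : ℕ) : Matrix (Fin (min μ r) × Fin (min ν q)) (Fin ν × Fin r) ℝ :=
  Matrix.of fun s p =>
    if (s.2:ℕ) ≤ (p.1:ℕ) ∧ (p.2:ℕ) = (s.1:ℕ) + ((p.1:ℕ) - (s.2:ℕ))
    then (((p.1:ℕ)).choose ((s.2:ℕ)) : ℝ) else 0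

lemma XY (q r μ ν : ℕ) : Xmat q r μ ν * Ymat q r μ ν = Acal q r μ ν 0 := by
  ext p p'
  obtain ⟨i, a⟩ := p
  obtain ⟨j, b⟩ := p'
  rw [Matrix.mul_apply, Acal0_apply]
  simp only [Xmat, Ymat, Matrix.of_apply]
  by_cases h : (a:ℕ) + (b:ℕ) = (i:ℕ) + (j:ℕ)
  · rw [if_pos h, Nat.add_choose_eq]
    push_cast
    refine Finset.sum_bij_ne_zero (fun s _ _ => ((i:ℕ) - (s.1:ℕ), (s.2:ℕ))) ?_ ?_ ?_ ?_
    · intro s _ h2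
      have hc1 : (s.1:ℕ) ≤ (i:ℕ) ∧ (a:ℕ) = (s.2:ℕ) + ((i:ℕ) - (s.1:ℕ)) := by
        by_contra hc
        rw [if_neg hc, zero_mul] at h2
        exact h2 rfl
      show ((i:ℕ) - (s.1:ℕ), (s.2:ℕ)) ∈ Finset.HasAntidiagonal.antidiagonal (a:ℕ)
      rw [Finset.HasAntidiagonal.mem_antidiagonal]
      omega
    · intro s1 _ h12 s2 _ h22 heq
      have hc1 : (s1.1:ℕ) ≤ (i:ℕ) ∧ (a:ℕ) = (s1.2:ℕ) + ((i:ℕ) - (s1.1:ℕ)) := by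
        by_contra hc
        rw [if_neg hc, zero_mul] at h12
        exact h12 rfl
      have hc2 : (s2.1:ℕ) ≤ (i:ℕ) ∧ (a:ℕ) = (s2.2:ℕ) + ((i:ℕ) - (s2.1:ℕ)) := by
        by_contra hc
        rw [if_neg hc, zero_mul] at h22
        exact h22 rfl
      have e1 := congrArg Prod.fst heq
      have e2 := congrArg Prod.snd heq
      simp only at e1 e2
      exact Prod.ext (Fin.ext (by omega)) (Fin.ext e2)
    · intro u hu hgu
      rw [Finset.HasAntidiagonal.mem_antidiagonal] at hu
      have hui : u.1 ≤ (i:ℕ) := by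
        by_contra hlt
        rw [Nat.choose_eq_zero_of_lt (show (i:ℕ) < u.1 by omega)] at hgu
        simp at hgu
      have huj : u.2 ≤ (j:ℕ) := by
        by_contra hlt
        rw [Nat.choose_eq_zero_of_lt (show (j:ℕ) < u.2 by omega)] at hgu
        simp at hgu
      have hs1 : (i:ℕ) - u.1 < min μ r := by
        have hi := i.2; have hb := b.2
        omega
      have hs2 : u.2 < min ν q := by
        have hj := j.2; have ha := a.2
        omega
      refine ⟨(⟨(i:ℕ) - u.1, hs1⟩, ⟨u.2, hs2⟩), Finset.mem_univ _, ?_, ?_⟩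
      · show (if (i:ℕ) - u.1 ≤ (i:ℕ) ∧ (a:ℕ) = u.2 + ((i:ℕ) - ((i:ℕ) - u.1))
            then (((i:ℕ)).choose ((i:ℕ) - u.1) : ℝ) else 0) *
          (if u.2 ≤ (j:ℕ) ∧ (b:ℕ) = ((i:ℕ) - u.1) + ((j:ℕ) - u.2)
            then (((j:ℕ)).choose u.2 : ℝ) else 0) ≠ 0
        rw [if_pos ⟨by omega, by omega⟩, if_pos ⟨huj, by omega⟩, Nat.choose_symm hui]
        refine mul_ne_zero ?_ ?_
        · exact_mod_cast (Nat.choose_pos hui).ne'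
        · exact_mod_cast (Nat.choose_pos huj).ne'
      · show ((i:ℕ) - ((i:ℕ) - u.1), u.2) = u
        have : (i:ℕ) - ((i:ℕ) - u.1) = u.1 := by omega
        rw [this]
    · intro s _ h2
      have hc1 : (s.1:ℕ) ≤ (i:ℕ) ∧ (a:ℕ) = (s.2:ℕ) + ((i:ℕ) - (s.1:ℕ)) := by
        by_contra hc
        rw [if_neg hc, zero_mul] at h2
        exact h2 rfl
      have hc2 : (s.2:ℕ) ≤ (j:ℕ) ∧ (b:ℕ) = (s.1:ℕ) + ((j:ℕ) - (s.2:ℕ)) := by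
        by_contra hc
        rw [if_neg hc, mul_zero] at h2
        exact h2 rfl
      rw [if_pos hc1, if_pos hc2]
      simp only
      rw [Nat.choose_symm hc1.1]
  · rw [if_neg h]
    refine Finset.sum_eq_zero fun s _ => ?_
    by_cases hc1 : (s.1:ℕ) ≤ (i:ℕ) ∧ (a:ℕ) = (s.2:ℕ) + ((i:ℕ) - (s.1:ℕ))
    · by_cases hc2 : (s.2:ℕ) ≤ (j:ℕ) ∧ (b:ℕ) = (s.1:ℕ) + ((j:ℕ) - (s.2:ℕ))
      · exfalso; omega
      · rw [if_neg hc2, mul_zero]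
    · rw [if_neg hc1, zero_mul]

lemma collapseL {m k : ℕ} (f : Fin m × Fin k → ℝ) {x y : ℕ} (hx : x < m) (hy : y < k) :
    (∑ p : Fin m × Fin k, (if (p.1:ℕ) = x ∧ (p.2:ℕ) = y then (1:ℝ) else 0) * f p)
      = f (⟨x, hx⟩, ⟨y, hy⟩) := by
  rw [Finset.sum_eq_single (⟨x, hx⟩, ⟨y, hy⟩)]
  · simp
  · intro p _ hp
    have : ¬((p.1:ℕ) = x ∧ (p.2:ℕ) = y) := by
      rintro ⟨h1, h2⟩
      exact hp (Prod.ext (Fin.ext h1) (Fin.ext h2))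
    rw [if_neg this, zero_mul]
  · intro hmem; exact absurd (Finset.mem_univ _) hmem

lemma collapseR {m k : ℕ} (f : Fin m × Fin k → ℝ) {x y : ℕ} (hx : x < m) (hy : y < k) :
    (∑ p : Fin m × Fin k, f p * (if (p.1:ℕ) = x ∧ (p.2:ℕ) = y then (1:ℝ) else 0))
      = f (⟨x, hx⟩, ⟨y, hy⟩) := by
  rw [Finset.sum_eq_single (⟨x, hx⟩, ⟨y, hy⟩)]
  · simp
  · intro p _ hp
    have : ¬((p.1:ℕ) = x ∧ (p.2:ℕ) = y) := by
      rintro ⟨h1, h2⟩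
      exact hp (Prod.ext (Fin.ext h1) (Fin.ext h2))
    rw [if_neg this, mul_zero]
  · intro hmem; exact absurd (Finset.mem_univ _) hmem

/-- Row-selection matrix. -/
def Pmsel (q r μ ν : ℕ) : Matrix (Fin (min μ r) × Fin (min ν q)) (Fin μ × Fin q) ℝ :=
  Matrix.of fun s p => if (p.1:ℕ) = (s.1:ℕ) ∧ (p.2:ℕ) = (s.2:ℕ) then 1 else 0

/-- Column-selection matrix. -/
def Qmsel (q r μ ν : ℕ) : Matrix (Fin ν × Fin r) (Fin (min μ r) × Fin (min ν q)) ℝ :=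
  Matrix.of fun p s => if (p.1:ℕ) = (s.2:ℕ) ∧ (p.2:ℕ) = (s.1:ℕ) then 1 else 0

lemma PmX_apply (q r μ ν : ℕ) (s s' : Fin (min μ r) × Fin (min ν q)) :
    (Pmsel q r μ ν * Xmat q r μ ν) s s' =
      if (s'.1:ℕ) ≤ (s.1:ℕ) ∧ (s.2:ℕ) = (s'.2:ℕ) + ((s.1:ℕ) - (s'.1:ℕ))
      then (((s.1:ℕ)).choose ((s'.1:ℕ)) : ℝ) else 0 := by
  rw [Matrix.mul_apply]
  have hx : (s.1:ℕ) < μ := by have := s.1.2; omega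
  have hy : (s.2:ℕ) < q := by have := s.2.2; omega
  exact collapseL (fun p => Xmat q r μ ν p s') hx hy

lemma YQm_apply (q r μ ν : ℕ) (s s' : Fin (min μ r) × Fin (min ν q)) :
    (Ymat q r μ ν * Qmsel q r μ ν) s s' =
      if (s.2:ℕ) ≤ (s'.2:ℕ) ∧ (s'.1:ℕ) = (s.1:ℕ) + ((s'.2:ℕ) - (s.2:ℕ))
      then (((s'.2:ℕ)).choose ((s.2:ℕ)) : ℝ) else 0 := by
  rw [Matrix.mul_apply]
  have hx : (s'.2:ℕ) < ν := by have := s'.2.2; omega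
  have hy : (s'.1:ℕ) < r := by have := s'.1.2; omega
  exact collapseR (fun p => Ymat q r μ ν s p) hx hy

lemma det_PmX (q r μ ν : ℕ) : (Pmsel q r μ ν * Xmat q r μ ν).det = 1 := by
  rw [det_tri _ (fun s => (s.1:ℕ))]
  · refine Finset.prod_eq_one fun s _ => ?_
    rw [PmX_apply, if_pos ⟨le_refl _, by omega⟩, Nat.choose_self]
    norm_num
  · intro p p' hlt
    rw [PmX_apply, if_neg]
    rintro ⟨h1, _⟩
    omega
  · intro p p' hw hne
    rw [PmX_apply, if_neg]
    rintro ⟨h1, h2⟩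
    exact hne (Prod.ext (Fin.ext hw) (Fin.ext (by omega)))

lemma det_YQm (q r μ ν : ℕ) : (Ymat q r μ ν * Qmsel q r μ ν).det = 1 := by
  rw [← Matrix.det_transpose, det_tri _ (fun s => (s.2:ℕ))]
  · refine Finset.prod_eq_one fun s _ => ?_
    rw [Matrix.transpose_apply, YQm_apply, if_pos ⟨le_refl _, by omega⟩, Nat.choose_self]
    norm_num
  · intro p p' hlt
    rw [Matrix.transpose_apply, YQm_apply, if_neg]
    rintro ⟨h1, _⟩
    omega
  · intro p p' hw hne
    rw [Matrix.transpose_apply, YQm_apply, if_neg]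
    rintro ⟨h1, h2⟩
    exact hne (Prod.ext (Fin.ext (by omega)) (Fin.ext hw))

lemma det_Uq (q : ℕ) (z : ℝ) : IsUnit (Uq q z).det := by
  rw [det_tri (Uq q z) (fun a : Fin q => (a:ℕ))]
  · rw [isUnit_iff_ne_zero]
    refine Finset.prod_ne_zero_iff.mpr fun a _ => ?_
    rw [Uq_apply, Nat.sub_self, pow_zero, mul_one, Nat.descFactorial_self]
    exact_mod_cast (Nat.factorial_pos _).ne'
  · intro p p' hlt
    rw [Uq_apply, Nat.descFactorial_eq_zero_iff_lt.mpr hlt]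
    simp
  · intro p p' hw hne
    exact absurd (Fin.ext hw) hne

lemma det_Wrm (r : ℕ) (z : ℝ) : IsUnit (Wrm r z).det := by
  rw [← Matrix.det_transpose, det_tri ((Wrm r z)ᵀ) (fun a : Fin r => (a:ℕ))]
  · rw [isUnit_iff_ne_zero]
    refine Finset.prod_ne_zero_iff.mpr fun a _ => ?_
    rw [Matrix.transpose_apply, Wrm_apply, Nat.sub_self, pow_zero, mul_one,
      Nat.descFactorial_self]
    exact_mod_cast (Nat.factorial_pos _).ne'
  · intro p p' hlt
    rw [Matrix.transpose_apply, Wrm_apply, Nat.descFactorial_eq_zero_iff_lt.mpr hlt]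
    simp
  · intro p p' hw hne
    exact absurd (Fin.ext hw) hne

lemma det_kron_one {μ q : ℕ} (U : Matrix (Fin q) (Fin q) ℝ) (h : IsUnit U.det) :
    IsUnit (((1 : Matrix (Fin μ) (Fin μ) ℝ) ⊗ₖ U)).det := by
  rw [Matrix.det_kronecker, Matrix.det_one, one_pow, one_mul]
  exact h.pow _

lemma rank_Acal0 (q r μ ν : ℕ) : (Acal q r μ ν 0).rank = min μ r * min ν q := by
  have hcard : Fintype.card (Fin (min μ r) × Fin (min ν q)) = min μ r * min ν q := by simp
  refine le_antisymm ?_ ?_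
  · rw [← XY]
    calc (Xmat q r μ ν * Ymat q r μ ν).rank
        ≤ (Xmat q r μ ν).rank := Matrix.rank_mul_le_left _ _
      _ ≤ Fintype.card (Fin (min μ r) × Fin (min ν q)) := Matrix.rank_le_card_width _
      _ = min μ r * min ν q := hcard
  · have hP : (Pmsel q r μ ν * Acal q r μ ν 0 * Qmsel q r μ ν)
        = (Pmsel q r μ ν * Xmat q r μ ν) * (Ymat q r μ ν * Qmsel q r μ ν) := by
      rw [← XY]
      simp only [Matrix.mul_assoc]
    have hU : IsUnit ((Pmsel q r μ ν * Xmat q r μ ν) * (Ymat q r μ ν * Qmsel q r μ ν)) := by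
      rw [Matrix.isUnit_iff_isUnit_det, Matrix.det_mul, det_PmX, det_YQm, one_mul]
      exact isUnit_one
    calc min μ r * min ν q = Fintype.card (Fin (min μ r) × Fin (min ν q)) := hcard.symm
      _ = ((Pmsel q r μ ν * Xmat q r μ ν) * (Ymat q r μ ν * Qmsel q r μ ν)).rank :=
          (Matrix.rank_of_isUnit _ hU).symm
      _ = (Pmsel q r μ ν * Acal q r μ ν 0 * Qmsel q r μ ν).rank := by rw [hP]
      _ ≤ (Pmsel q r μ ν * Acal q r μ ν 0).rank := Matrix.rank_mul_le_left _ _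
      _ ≤ (Acal q r μ ν 0).rank := Matrix.rank_mul_le_right _ _

end AuxProofs

theorem statement5 (q r μ ν : ℕ) (hq : 0 < q) (hr : 0 < r) (hμ : 0 < μ) (hν : 0 < ν) :
    ∀ z : ℝ,
      Mcal q r μ ν z =
        ((1 : Matrix (Fin μ) (Fin μ) ℝ) ⊗ₖ Uq q z) * Acal q r μ ν 0 *
          ((1 : Matrix (Fin ν) (Fin ν) ℝ) ⊗ₖ Wrm r z) ∧
      (Mcal q r μ ν z).rank = (Acal q r μ ν 0).rank ∧
      (Mcal q r μ ν z).rank = min μ r * min ν q := by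
  intro z
  have h2 : (Mcal q r μ ν z).rank = (Acal q r μ ν 0).rank := by
    rw [part1 q r μ ν z,
      Matrix.rank_mul_eq_left_of_isUnit_det _ _ (det_kron_one (Wrm r z) (det_Wrm r z)),
      Matrix.rank_mul_eq_right_of_isUnit_det _ _ (det_kron_one (Uq q z) (det_Uq q z))]
  exact ⟨part1 q r μ ν z, h2, h2.trans (rank_Acal0 q r μ ν)⟩
end
end

section
/- For every z ∈ ℝ the following factorizations hold (⊗ the Kronecker product): 𝒜(z) = (Ũ_μ(z) ⊗ I_q) · 𝒜(0) · (W̃_ν(z) ⊗ I_r); 𝓜(z) = (I_μ ⊗ Ũ_q(z)) · 𝓜(0) · (I_ν ⊗ W̃_r(z)); and 𝓝(z) = (I_μ ⊗ Ũ_q(z)) · 𝓝(0) · (I_ν ⊗ W̃_r(z)). -/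
open Matrix Kronecker

noncomputable section

section AuxLemmas

lemma aux_iterDeriv_pow (n m : ℕ) :
    iteratedDeriv n (fun t : ℝ => t ^ m) = fun z => (m.descFactorial n : ℝ) * z ^ (m - n) := by
  induction n with
  | zero => funext z; simp
  | succ n ih =>
    rw [iteratedDeriv_succ, ih]
    funext z
    rw [deriv_const_mul _ (differentiableAt_pow _), deriv_pow_field, Nat.descFactorial_succ]
    have h1 : m - (n + 1) = m - n - 1 := by omega
    rw [h1]; push_cast; ring

lemma aux_Md_apply (q r n : ℕ) (z : ℝ) (a : Fin q) (b : Fin r) :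
    Md q r n z a b = (((a : ℕ) + (b : ℕ)).descFactorial n : ℝ) * z ^ ((a : ℕ) + (b : ℕ) - n) := by
  simp only [Md, Matrix.of_apply, aux_iterDeriv_pow]

lemma aux_Md_zero (q r n : ℕ) (a : Fin q) (b : Fin r) :
    Md q r n 0 a b = if (a : ℕ) + (b : ℕ) = n then (n.factorial : ℝ) else 0 := by
  rw [aux_Md_apply]
  rcases lt_trichotomy ((a : ℕ) + (b : ℕ)) n with h | h | h
  · rw [if_neg (by omega), Nat.descFactorial_eq_zero_iff_lt.mpr h]; simp
  · rw [if_pos h, h, Nat.sub_self, pow_zero, Nat.descFactorial_self, mul_one]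
  · rw [if_neg (by omega), zero_pow (show (a : ℕ) + (b : ℕ) - n ≠ 0 by omega), mul_zero]

lemma aux_Amat_zero (q r k : ℕ) (a : Fin q) (b : Fin r) :
    Amat q r k 0 a b
      = if k = (a : ℕ) + (b : ℕ) then ((((a : ℕ) + (b : ℕ)).choose a : ℕ) : ℝ) else 0 := by
  simp only [Amat, Matrix.of_apply]
  by_cases h : (a : ℕ) + (b : ℕ) ≤ k
  · rw [if_pos h]
    by_cases h2 : k = (a : ℕ) + (b : ℕ)
    · have e1 : (a : ℕ) + (b : ℕ) - (a : ℕ) = (b : ℕ) := by omega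
      rw [if_pos h2, h2, e1, Nat.sub_self, pow_zero, Nat.choose_self]; simp
    · rw [if_neg h2, zero_pow (show k - (a : ℕ) - (b : ℕ) ≠ 0 by omega), mul_zero]
  · rw [if_neg h, if_neg (by omega)]

lemma aux_Amat_eq (q r k : ℕ) (z : ℝ) (a : Fin q) (b : Fin r) :
    Amat q r k z a b
      = (k.choose ((a : ℕ) + (b : ℕ)) : ℝ) * (((a : ℕ) + (b : ℕ)).choose a : ℝ) *
          z ^ (k - ((a : ℕ) + (b : ℕ))) := by
  simp only [Amat, Matrix.of_apply]
  by_cases h : (a : ℕ) + (b : ℕ) ≤ k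
  · rw [if_pos h]
    have hc := Nat.choose_mul (n := k) (k := (a : ℕ) + (b : ℕ)) (s := (a : ℕ))
      (Nat.le_add_right _ _)
    rw [Nat.add_sub_cancel_left] at hc
    rw [Nat.sub_sub]
    rw [show (k.choose a : ℝ) * ((k - (a : ℕ)).choose b : ℝ)
        = ((k.choose ((a : ℕ) + (b : ℕ)) * (((a : ℕ) + (b : ℕ)).choose a) : ℕ) : ℝ) by
      rw [hc]; push_cast; ring]
    push_cast; ring
  · rw [if_neg h, Nat.choose_eq_zero_of_lt (by omega)]; simp

lemma aux_sum_choose_grid (p q n c d : ℕ) (hc : c < p) (hd : d < q) :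
    ∑ x ∈ Finset.range p, ∑ y ∈ Finset.range q,
      (if x + y = n then c.choose x * d.choose y else 0) = (c + d).choose n := by
  rw [← Finset.sum_product']
  rw [show (∑ ij ∈ Finset.range p ×ˢ Finset.range q,
      if ij.1 + ij.2 = n then c.choose ij.1 * d.choose ij.2 else 0)
    = ∑ ij ∈ (Finset.range p ×ˢ Finset.range q).filter (fun ij => ij.1 + ij.2 = n),
        c.choose ij.1 * d.choose ij.2 from (Finset.sum_filter _ _).symm]
  rw [Nat.add_choose_eq]
  apply Finset.sum_subset
  · intro ij hij
    simp only [Finset.mem_filter] at hij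
    simpa [Finset.mem_antidiagonal] using hij.2
  · intro ij hij hnot
    rw [Finset.HasAntidiagonal.mem_antidiagonal] at hij
    simp only [Finset.mem_filter, Finset.mem_product, Finset.mem_range] at hnot
    have h : p ≤ ij.1 ∨ q ≤ ij.2 := by
      by_contra hh; push_neg at hh; exact hnot ⟨⟨hh.1, hh.2⟩, hij⟩
    rcases h with h | h
    · rw [Nat.choose_eq_zero_of_lt (show c < ij.1 by omega), Nat.zero_mul]
    · rw [Nat.choose_eq_zero_of_lt (show d < ij.2 by omega), Nat.mul_zero]

lemma aux_key (P Q : ℕ) (i : Fin P) (j : Fin Q) (n : ℕ) (z c : ℝ) :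
    ∑ x : Fin P, ∑ y : Fin Q, Ut P z i x * (if (x : ℕ) + (y : ℕ) = n then c else 0) * Wt Q z y j
      = (((i : ℕ) + (j : ℕ)).choose n : ℝ) * c * z ^ ((i : ℕ) + (j : ℕ) - n) := by
  have step : ∀ x : Fin P, ∀ y : Fin Q,
      Ut P z i x * (if (x : ℕ) + (y : ℕ) = n then c else 0) * Wt Q z y j
        = (if (x : ℕ) + (y : ℕ) = n then (((i : ℕ).choose x * (j : ℕ).choose y : ℕ) : ℝ) else 0) *
            (c * z ^ ((i : ℕ) + (j : ℕ) - n)) := by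
    intro x y
    by_cases h : (x : ℕ) + (y : ℕ) = n
    · by_cases h1 : (x : ℕ) ≤ (i : ℕ)
      · by_cases h2 : (y : ℕ) ≤ (j : ℕ)
        · simp only [Ut, Wt, Matrix.of_apply, if_pos h1, if_pos h2, if_pos h]
          push_cast
          rw [show (i : ℕ) + (j : ℕ) - n = ((i : ℕ) - (x : ℕ)) + ((j : ℕ) - (y : ℕ)) from by
            omega, pow_add]
          ring
        · simp [Ut, Wt, if_neg h2, Nat.choose_eq_zero_of_lt (show (j : ℕ) < y by omega)]
      · simp [Ut, Wt, if_neg h1, Nat.choose_eq_zero_of_lt (show (i : ℕ) < x by omega)]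
    · simp [h]
  calc ∑ x : Fin P, ∑ y : Fin Q, Ut P z i x * (if (x : ℕ) + (y : ℕ) = n then c else 0) * Wt Q z y j
      = ∑ x : Fin P, ∑ y : Fin Q,
          (if (x : ℕ) + (y : ℕ) = n then (((i : ℕ).choose x * (j : ℕ).choose y : ℕ) : ℝ) else 0) *
            (c * z ^ ((i : ℕ) + (j : ℕ) - n)) := by
        exact Finset.sum_congr rfl fun x _ => Finset.sum_congr rfl fun y _ => step x y
    _ = (∑ x : Fin P, ∑ y : Fin Q,
          (if (x : ℕ) + (y : ℕ) = n then (((i : ℕ).choose x * (j : ℕ).choose y : ℕ) : ℝ) else 0)) *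
            (c * z ^ ((i : ℕ) + (j : ℕ) - n)) := by
        rw [Finset.sum_mul]; exact Finset.sum_congr rfl fun x _ => (Finset.sum_mul _ _ _).symm
    _ = ((∑ x ∈ Finset.range P, ∑ y ∈ Finset.range Q,
          (if x + y = n then (i : ℕ).choose x * (j : ℕ).choose y else 0) : ℕ) : ℝ) *
            (c * z ^ ((i : ℕ) + (j : ℕ) - n)) := by
        congr 1
        push_cast
        rw [← Fin.sum_univ_eq_sum_range]
        refine Finset.sum_congr rfl fun x _ => ?_
        rw [← Fin.sum_univ_eq_sum_range]
    _ = (((i : ℕ) + (j : ℕ)).choose n : ℝ) * c * z ^ ((i : ℕ) + (j : ℕ) - n) := by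
        rw [aux_sum_choose_grid P Q n i j i.isLt j.isLt, mul_assoc]

lemma aux_triple {μ q ν r : ℕ} (U : Matrix (Fin q) (Fin q) ℝ) (W : Matrix (Fin r) (Fin r) ℝ)
    (X : Matrix (Fin μ × Fin q) (Fin ν × Fin r) ℝ) (i : Fin μ) (a : Fin q) (j : Fin ν) (b : Fin r) :
    (((1 : Matrix (Fin μ) (Fin μ) ℝ) ⊗ₖ U) * X * ((1 : Matrix (Fin ν) (Fin ν) ℝ) ⊗ₖ W)) (i,a) (j,b)
      = ∑ a' : Fin q, ∑ b' : Fin r, U a a' * X (i,a') (j,b') * W b' b := by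
  rw [Finset.sum_comm]
  simp [Matrix.mul_apply, Fintype.sum_prod_type, Matrix.one_apply, ite_mul, mul_ite,
    Finset.sum_mul, Finset.mul_sum]

lemma aux_triple' {μ q ν r : ℕ} (U : Matrix (Fin μ) (Fin μ) ℝ) (W : Matrix (Fin ν) (Fin ν) ℝ)
    (X : Matrix (Fin μ × Fin q) (Fin ν × Fin r) ℝ) (i : Fin μ) (a : Fin q) (j : Fin ν) (b : Fin r) :
    ((U ⊗ₖ (1 : Matrix (Fin q) (Fin q) ℝ)) * X * (W ⊗ₖ (1 : Matrix (Fin r) (Fin r) ℝ))) (i,a) (j,b)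
      = ∑ i' : Fin μ, ∑ j' : Fin ν, U i i' * X (i',a) (j',b) * W j' j := by
  rw [Finset.sum_comm]
  simp [Matrix.mul_apply, Fintype.sum_prod_type, Matrix.one_apply, ite_mul, mul_ite,
    Finset.sum_mul, Finset.mul_sum]

end AuxLemmas

theorem statement7 (q r μ ν : ℕ) (hq : 0 < q) (hr : 0 < r) (hμ : 0 < μ) (hν : 0 < ν) :
    ∀ z : ℝ,
      Acal q r μ ν z =
        (Ut μ z ⊗ₖ (1 : Matrix (Fin q) (Fin q) ℝ)) * Acal q r μ ν 0 *
          (Wt ν z ⊗ₖ (1 : Matrix (Fin r) (Fin r) ℝ)) ∧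
      Mcal q r μ ν z =
        ((1 : Matrix (Fin μ) (Fin μ) ℝ) ⊗ₖ Ut q z) * Mcal q r μ ν 0 *
          ((1 : Matrix (Fin ν) (Fin ν) ℝ) ⊗ₖ Wt r z) ∧
      Ncal q r μ ν z =
        ((1 : Matrix (Fin μ) (Fin μ) ℝ) ⊗ₖ Ut q z) * Ncal q r μ ν 0 *
          ((1 : Matrix (Fin ν) (Fin ν) ℝ) ⊗ₖ Wt r z) := by
  intro z
  refine ⟨?_, ?_, ?_⟩
  · refine Matrix.ext fun p p' => ?_
    obtain ⟨i, a⟩ := p; obtain ⟨j, b⟩ := p'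
    rw [aux_triple']
    have hstep : ∀ (i' : Fin μ) (j' : Fin ν),
        Ut μ z i i' * Acal q r μ ν 0 (i', a) (j', b) * Wt ν z j' j
          = Ut μ z i i' * (if (i' : ℕ) + (j' : ℕ) = (a : ℕ) + (b : ℕ)
              then ((((a : ℕ) + (b : ℕ)).choose a : ℕ) : ℝ) else 0) * Wt ν z j' j := by
      intro i' j'
      simp only [Acal, Matrix.of_apply, aux_Amat_zero]
    rw [Finset.sum_congr rfl fun i' _ => Finset.sum_congr rfl fun j' _ => hstep i' j']
    rw [aux_key]
    simp only [Acal, Matrix.of_apply, aux_Amat_eq]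
  · refine Matrix.ext fun p p' => ?_
    obtain ⟨i, a⟩ := p; obtain ⟨j, b⟩ := p'
    rw [aux_triple]
    have hstep : ∀ (a' : Fin q) (b' : Fin r),
        Ut q z a a' * Mcal q r μ ν 0 (i, a') (j, b') * Wt r z b' b
          = Ut q z a a' * (if (a' : ℕ) + (b' : ℕ) = (i : ℕ) + (j : ℕ)
              then ((((i : ℕ) + (j : ℕ)).factorial : ℕ) : ℝ) else 0) * Wt r z b' b := by
      intro a' b'
      simp only [Mcal, Matrix.of_apply, aux_Md_zero]
    rw [Finset.sum_congr rfl fun a' _ => Finset.sum_congr rfl fun b' _ => hstep a' b']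
    rw [aux_key]
    simp only [Mcal, Matrix.of_apply, aux_Md_apply,
      Nat.descFactorial_eq_factorial_mul_choose]
    push_cast; ring
  · refine Matrix.ext fun p p' => ?_
    obtain ⟨i, a⟩ := p; obtain ⟨j, b⟩ := p'
    rw [aux_triple]
    have hdiv : ∀ (P : Prop) [inst : Decidable P] (x d : ℝ),
        (if P then x else 0) / d = if P then x / d else 0 := fun P inst x d => by
      split <;> simp
    have hstep : ∀ (a' : Fin q) (b' : Fin r),
        Ut q z a a' * Ncal q r μ ν 0 (i, a') (j, b') * Wt r z b' b
          = Ut q z a a' * (if (a' : ℕ) + (b' : ℕ) = (i : ℕ) + (j : ℕ)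
              then ((((i : ℕ) + (j : ℕ)).factorial : ℕ) : ℝ) /
                ((Nat.factorial (i : ℕ) : ℝ) * (Nat.factorial (j : ℕ) : ℝ)) else 0) *
            Wt r z b' b := by
      intro a' b'
      simp only [Ncal, Matrix.of_apply, aux_Md_zero, hdiv]
    rw [Finset.sum_congr rfl fun a' _ => Finset.sum_congr rfl fun b' _ => hstep a' b']
    rw [aux_key]
    simp only [Ncal, Matrix.of_apply, aux_Md_apply,
      Nat.descFactorial_eq_factorial_mul_choose]
    push_cast; ring
end
end

section
/- Assume r ≥ 2 and ν ≤ q, and let K(z) = I_ν ⊗ F(z) + S_ν ⊗ F'(z) ∈ ℝ^{νr×ν(r−1)}. Then for every z ∈ ℝ: K(z) has full column rank ν(r−1); 𝓝^0(z)·K(z) = 0; and the columns of K(z) form a basis of the kernel of 𝓝^0(z). In particular dim ker 𝓝^0(z) = ν(r−1). -/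
open Matrix Kronecker

noncomputable section

lemma iterDeriv_pow (m n : ℕ) :
    iteratedDeriv n (fun x : ℝ => x ^ m) = fun z => (m.descFactorial n : ℝ) * z ^ (m - n) := by
  induction n with
  | zero => funext z; simp
  | succ n ih =>
    funext z
    rw [iteratedDeriv_succ, ih]
    have h : deriv (fun z : ℝ => (m.descFactorial n : ℝ) * z ^ (m - n)) z
        = (m.descFactorial n : ℝ) * (((m - n : ℕ) : ℝ) * z ^ (m - n - 1)) := by
      rw [deriv_const_mul _ (differentiableAt_pow _), deriv_pow_field]
    rw [h]
    have e : m - (n + 1) = m - n - 1 := by omega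
    rw [Nat.descFactorial_succ, e]
    push_cast
    ring

lemma Sh_pow_apply (k : ℕ) : ∀ (m : ℕ) (i j : Fin k),
    ((Sh k) ^ m) i j = if (i : ℕ) + m = (j : ℕ) then 1 else 0 := by
  intro m
  induction m with
  | zero =>
    intro i j
    simp only [pow_zero, Matrix.one_apply, Nat.add_zero]
    simp [Fin.ext_iff]
  | succ m ih =>
    intro i j
    rw [pow_succ, Matrix.mul_apply]
    have h1 : ∀ l : Fin k, ((Sh k) ^ m) i l * Sh k l j
        = if (i : ℕ) + m = (l : ℕ) ∧ (l : ℕ) + 1 = (j : ℕ) then 1 else 0 := by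
      intro l
      rw [ih]
      simp only [Sh, Matrix.of_apply]
      split_ifs <;> simp_all
    simp only [h1]
    by_cases h : (i : ℕ) + m < k
    · have h2 : ∀ l : Fin k, (if (i : ℕ) + m = (l : ℕ) ∧ (l : ℕ) + 1 = (j : ℕ) then (1:ℝ) else 0)
          = if l = ⟨(i:ℕ)+m, h⟩ then (if (i:ℕ) + (m+1) = (j:ℕ) then (1:ℝ) else 0) else 0 := by
        intro l
        rcases eq_or_ne l (⟨(i:ℕ)+m, h⟩ : Fin k) with hl | hl
        · subst hl
          rw [if_pos rfl]
          simp only [Fin.val_mk]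
          exact if_congr (by rw [true_and]; omega) rfl rfl
        · rw [if_neg hl, if_neg]
          rintro ⟨h1', -⟩
          exact hl (Fin.ext h1'.symm)
      simp only [h2]
      rw [Finset.sum_ite_eq' Finset.univ]
      simp
    · have hj : ¬ ((i : ℕ) + (m+1) = (j : ℕ)) := by have := j.isLt; omega
      rw [if_neg hj]
      apply Finset.sum_eq_zero
      intro l _
      rw [if_neg]
      rintro ⟨h1', h2'⟩
      exact h (h1' ▸ l.isLt)

lemma Sh_pow_eq_zero (k : ℕ) : (Sh k) ^ k = 0 := by
  ext i j
  rw [Sh_pow_apply]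
  simp only [Matrix.zero_apply]
  rw [if_neg]
  have := j.isLt
  omega

lemma kron_pow {a b : ℕ} (A : Matrix (Fin a) (Fin a) ℝ) (B : Matrix (Fin b) (Fin b) ℝ) (m : ℕ) :
    (A ⊗ₖ B) ^ m = (A ^ m) ⊗ₖ (B ^ m) := by
  induction m with
  | zero => simp [Matrix.one_kronecker_one]
  | succ m ih => rw [pow_succ, pow_succ, pow_succ, ih, Matrix.mul_kronecker_mul]

lemma keyid (m k : ℕ) (z : ℝ) :
    -z * ((m.descFactorial (k+1) : ℝ) * z ^ (m - (k+1)))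
      + (((m+1).descFactorial (k+1) : ℝ) * z ^ (m + 1 - (k+1)))
      = (k+1) * ((m.descFactorial k : ℝ) * z ^ (m - k)) := by
  rw [Nat.succ_descFactorial_succ, Nat.descFactorial_succ]
  rcases lt_trichotomy k m with h | h | h
  · have h2 : m + 1 - (k+1) = m - k := by omega
    have h1 : m - k = m - (k+1) + 1 := by omega
    rw [h2, h1, pow_succ]
    push_cast [Nat.cast_sub (show k + 1 ≤ m by omega)]
    ring
  · subst h
    have e1 : k - k = 0 := by omega
    have e2 : k + 1 - (k+1) = 0 := by omega
    have e3 : k - (k+1) = 0 := by omega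
    rw [e1, e2, e3]
    push_cast
    ring
  · have h0 : m.descFactorial k = 0 := Nat.descFactorial_eq_zero_iff_lt.mpr h
    have h0' : m - k = 0 := by omega
    rw [h0, h0']
    push_cast
    ring

lemma K_entry (r ν : ℕ) (hr : 2 ≤ r) (z : ℝ) (p q : Fin ν × Fin (r-1)) :
    ((1 - (z • (1 : Matrix (Fin ν) (Fin ν) ℝ) + Sh ν) ⊗ₖ Sh (r-1) :
        Matrix (Fin ν × Fin (r-1)) (Fin ν × Fin (r-1)) ℝ)) p q
      = ((1 : Matrix (Fin ν) (Fin ν) ℝ) ⊗ₖ Fm r z + Sh ν ⊗ₖ Fm' r)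
          ((p.1, ⟨(p.2 : ℕ) + 1, by have := p.2.isLt; omega⟩) : Fin ν × Fin r) q := by
  obtain ⟨i, a⟩ := p
  obtain ⟨j, b⟩ := q
  simp only [Matrix.sub_apply, Matrix.add_apply, Matrix.kroneckerMap_apply, Sh, Fm, Fm',
    Matrix.of_apply, Matrix.one_apply, Matrix.smul_apply, smul_eq_mul, Fin.val_mk,
    Prod.mk.injEq, mul_ite, ite_mul, mul_one, mul_zero, one_mul, zero_mul, Prod.ext_iff]
  by_cases h1 : i = j <;> by_cases h2 : a = b <;>
    by_cases h3 : (a : ℕ) + 1 = (b : ℕ) <;> by_cases h4 : (i : ℕ) + 1 = (j : ℕ) <;>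
      simp_all [Fin.ext_iff] <;> split_ifs <;> ring_nf <;> omega

set_option maxHeartbeats 1000000 in
lemma K_inj (r ν : ℕ) (hr : 2 ≤ r) (z : ℝ) :
    Function.Injective
      (((1 : Matrix (Fin ν) (Fin ν) ℝ) ⊗ₖ Fm r z + Sh ν ⊗ₖ Fm' r).mulVecLin) := by
  set K := (1 : Matrix (Fin ν) (Fin ν) ℝ) ⊗ₖ Fm r z + Sh ν ⊗ₖ Fm' r with hKdef
  set N := (z • (1 : Matrix (Fin ν) (Fin ν) ℝ) + Sh ν) ⊗ₖ Sh (r-1) with hNdef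
  have hNnil : IsNilpotent N := ⟨r - 1, by
    rw [hNdef, kron_pow, Sh_pow_eq_zero]
    ext p q
    simp [Matrix.kroneckerMap_apply]⟩
  have hU : IsUnit ((1 : Matrix (Fin ν × Fin (r-1)) (Fin ν × Fin (r-1)) ℝ) - N) :=
    hNnil.isUnit_one_sub
  have h0 : ∀ x : Fin ν × Fin (r-1) → ℝ, K.mulVec x = 0 → x = 0 := by
    intro x hx
    have hsub : ((1 : Matrix _ _ ℝ) - N).mulVec x = 0 := by
      funext p
      have he : ((1 : Matrix _ _ ℝ) - N).mulVec x p
          = K.mulVec x ((p.1, ⟨(p.2 : ℕ) + 1, by have := p.2.isLt; omega⟩) : Fin ν × Fin r) := by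
        simp only [Matrix.mulVec, dotProduct]
        exact Finset.sum_congr rfl fun s _ => by rw [K_entry r ν hr z p s]
      rw [he, hx]
      rfl
    obtain ⟨u, hu⟩ := hU
    have h2 : (↑u⁻¹ : Matrix _ _ ℝ).mulVec (((1 : Matrix _ _ ℝ) - N).mulVec x)
        = x := by
      rw [Matrix.mulVec_mulVec, ← hu, Units.inv_mul, Matrix.one_mulVec]
    rw [hsub, Matrix.mulVec_zero] at h2
    exact h2.symm
  intro x y hxy
  have : K.mulVec (x - y) = 0 := by
    rw [show K *ᵥ (x - y) = K.mulVecLin (x - y) from rfl, map_sub, hxy, sub_self]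
  have := h0 _ this
  exact sub_eq_zero.mp this

lemma Md_eq (q r n : ℕ) (z : ℝ) (a : Fin q) (b : Fin r) :
    Md q r n z a b = (((a:ℕ)+(b:ℕ)).descFactorial n : ℝ) * z ^ ((a:ℕ)+(b:ℕ) - n) := by
  simp [Md, iterDeriv_pow]

set_option maxHeartbeats 1000000 in
lemma NK_zero (q r ν : ℕ) (hr : 2 ≤ r) (z : ℝ) :
    Ncal0 q r ν z * ((1 : Matrix (Fin ν) (Fin ν) ℝ) ⊗ₖ Fm r z + Sh ν ⊗ₖ Fm' r) = 0 := by
  ext a jc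
  obtain ⟨j, c⟩ := jc
  have hc1 : (c : ℕ) < r - 1 := c.isLt
  set c0 : Fin r := ⟨(c : ℕ), by omega⟩ with hc0
  set c1 : Fin r := ⟨(c : ℕ) + 1, by omega⟩ with hc1'
  rw [Matrix.mul_apply, Matrix.zero_apply, Fintype.sum_prod_type]
  -- rewrite each inner term
  have hterm : ∀ (i : Fin ν) (b : Fin r),
      Ncal0 q r ν z a (i, b)
        * ((1 : Matrix (Fin ν) (Fin ν) ℝ) ⊗ₖ Fm r z + Sh ν ⊗ₖ Fm' r) (i, b) (j, c)
      = (if i = j then Ncal0 q r ν z a (i, b) * Fm r z b c else 0)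
        + (if (i : ℕ) + 1 = (j : ℕ) then Ncal0 q r ν z a (i, b) * Fm' r b c else 0) := by
    intro i b
    simp only [Matrix.add_apply, Matrix.kroneckerMap_apply, Matrix.one_apply, Sh,
      Matrix.of_apply]
    split_ifs <;> ring
  simp only [hterm]
  simp only [Finset.sum_add_distrib]
  have hsum1 : ∀ i : Fin ν,
      (∑ b : Fin r, (if i = j then Ncal0 q r ν z a (i, b) * Fm r z b c else 0))
      = if i = j then (-z * Ncal0 q r ν z a (i, c0) + Ncal0 q r ν z a (i, c1)) else 0 := by
    intro i
    split_ifs with h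
    · have hb : ∀ b : Fin r, Ncal0 q r ν z a (i, b) * Fm r z b c
          = (if b = c0 then -z * Ncal0 q r ν z a (i, b) else 0)
            + (if b = c1 then Ncal0 q r ν z a (i, b) else 0) := by
        intro b
        simp only [Fm, Matrix.of_apply]
        rcases eq_or_ne b c0 with hb0 | hb0
        · subst hb0
          rw [if_pos (by simp [hc0]), if_pos rfl, if_neg (by simp only [hc0, hc1', Fin.mk.injEq]; omega)]
          ring
        · rcases eq_or_ne b c1 with hb1 | hb1
          · subst hb1
            rw [if_neg (by simp only [hc1', Fin.val_mk]; omega), if_pos (by simp [hc1']),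
              if_neg (by simp only [hc0, hc1', Fin.mk.injEq]; omega), if_pos rfl]
            ring
          · rw [if_neg, if_neg, if_neg hb0, if_neg hb1]
            · ring
            · intro hh; exact hb1 (Fin.ext (by simpa [hc1'] using hh))
            · intro hh; exact hb0 (Fin.ext (by simpa [hc0] using hh))
      simp only [hb]
      rw [Finset.sum_add_distrib, Finset.sum_ite_eq' Finset.univ, Finset.sum_ite_eq' Finset.univ]
      simp
    · exact Finset.sum_eq_zero fun b _ => rfl
  have hsum2 : ∀ i : Fin ν,
      (∑ b : Fin r, (if (i:ℕ) + 1 = (j:ℕ) then Ncal0 q r ν z a (i, b) * Fm' r b c else 0))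
      = if (i:ℕ) + 1 = (j:ℕ) then -(Ncal0 q r ν z a (i, c0)) else 0 := by
    intro i
    split_ifs with h
    · have hb : ∀ b : Fin r, Ncal0 q r ν z a (i, b) * Fm' r b c
          = (if b = c0 then -(Ncal0 q r ν z a (i, b)) else 0) := by
        intro b
        simp only [Fm', Matrix.of_apply]
        rcases eq_or_ne b c0 with hb0 | hb0
        · subst hb0; rw [if_pos (by simp [hc0]), if_pos rfl]; ring
        · rw [if_neg, if_neg hb0]
          · ring
          · intro hh; exact hb0 (Fin.ext (by simpa [hc0] using hh))
      simp only [hb]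
      rw [Finset.sum_ite_eq' Finset.univ]
      simp
    · exact Finset.sum_eq_zero fun b _ => rfl
  simp only [hsum1, hsum2]
  rw [Finset.sum_ite_eq' Finset.univ]
  simp only [Finset.mem_univ, if_true]
  -- now case on j
  rcases Nat.eq_zero_or_eq_succ_pred (j : ℕ) with hj0 | hjs
  · -- j = 0 : second sum vanishes
    rw [Finset.sum_eq_zero (fun i _ => if_neg (by omega))]
    simp only [Ncal0, Matrix.of_apply, hj0, Md_eq]
    simp only [Nat.factorial_zero, Nat.cast_one, div_one, Nat.descFactorial_zero,
      Nat.cast_one, one_mul, Nat.sub_zero, Fin.val_mk]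
    ring
  · set k := (j : ℕ) - 1 with hk
    have hjk : (j : ℕ) = k + 1 := by omega
    have hik : k < ν := by have := j.isLt; omega
    set i0 : Fin ν := ⟨k, hik⟩ with hi0
    have hcoll : ∀ i : Fin ν,
        (if (i:ℕ) + 1 = (j:ℕ) then -(Ncal0 q r ν z a (i, c0)) else 0)
        = if i = i0 then -(Ncal0 q r ν z a (i, c0)) else 0 := by
      intro i
      refine if_congr ?_ rfl rfl
      rw [Fin.ext_iff, hi0]
      simp only [Fin.val_mk]
      omega
    rw [Finset.sum_congr rfl (fun i _ => hcoll i), Finset.sum_ite_eq' Finset.univ]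
    simp only [Finset.mem_univ, if_true]
    simp only [Ncal0, Matrix.of_apply, Md_eq, hjk, hi0, Fin.val_mk, hc0, hc1']
    set m := (a : ℕ) + (c : ℕ) with hm
    have hm1 : (a : ℕ) + ((c : ℕ) + 1) = m + 1 := by omega
    rw [hm1]
    have hfac : ((k+1).factorial : ℝ) = (k+1) * (k.factorial : ℝ) := by
      push_cast [Nat.factorial_succ]; ring
    have hne : (k.factorial : ℝ) ≠ 0 := Nat.cast_ne_zero.mpr (Nat.factorial_ne_zero k)
    have hne1 : ((k+1).factorial : ℝ) ≠ 0 := Nat.cast_ne_zero.mpr (Nat.factorial_ne_zero _)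
    have hkid := keyid m k z
    have e1 : m + 1 - (k + 1) = m - k := by omega
    rw [e1] at hkid
    set D1 : ℝ := (m.descFactorial (k+1) : ℝ) with hD1
    set D2 : ℝ := ((m+1).descFactorial (k+1) : ℝ) with hD2
    set D0 : ℝ := (m.descFactorial k : ℝ) with hD0
    rw [e1, hfac]
    field_simp
    linear_combination hkid

set_option maxHeartbeats 1000000 in
lemma Ncal0_rank_ge (q r ν : ℕ) (hr : 2 ≤ r) (hνq : ν ≤ q) (z : ℝ) :
    ν ≤ (Ncal0 q r ν z).rank := by
  classical
  set P : Matrix (Fin ν) (Fin q) ℝ :=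
    Matrix.of (fun i a => if a = (⟨(i : ℕ), lt_of_lt_of_le i.isLt hνq⟩ : Fin q) then 1 else 0)
    with hP
  set Q : Matrix (Fin ν × Fin r) (Fin ν) ℝ :=
    Matrix.of (fun p j => if p = ((j, ⟨0, by omega⟩) : Fin ν × Fin r) then 1 else 0) with hQ
  set T := P * (Ncal0 q r ν z * Q) with hT
  have hTij : ∀ i j : Fin ν,
      T i j = Ncal0 q r ν z ⟨(i : ℕ), lt_of_lt_of_le i.isLt hνq⟩ ((j, ⟨0, by omega⟩)) := by
    intro i j
    rw [hT, Matrix.mul_apply]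
    have h1 : ∀ a : Fin q, P i a * (Ncal0 q r ν z * Q) a j
        = if a = (⟨(i : ℕ), lt_of_lt_of_le i.isLt hνq⟩ : Fin q)
            then (Ncal0 q r ν z * Q) a j else 0 := by
      intro a
      rw [hP]
      simp only [Matrix.of_apply]
      split_ifs <;> ring
    simp only [h1]
    rw [Finset.sum_ite_eq' Finset.univ, if_pos (Finset.mem_univ _), Matrix.mul_apply]
    have h2 : ∀ p : Fin ν × Fin r,
        Ncal0 q r ν z ⟨(i : ℕ), lt_of_lt_of_le i.isLt hνq⟩ p * Q p j
        = if p = ((j, ⟨0, by omega⟩) : Fin ν × Fin r)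
            then Ncal0 q r ν z ⟨(i : ℕ), lt_of_lt_of_le i.isLt hνq⟩ p else 0 := by
      intro p
      rw [hQ]
      simp only [Matrix.of_apply]
      split_ifs <;> ring
    simp only [h2]
    rw [Finset.sum_ite_eq' Finset.univ, if_pos (Finset.mem_univ _)]
  have hTval : ∀ i j : Fin ν,
      T i j = (((i:ℕ)).descFactorial (j:ℕ) : ℝ) * z ^ ((i:ℕ) - (j:ℕ))
        / ((j:ℕ).factorial : ℝ) := by
    intro i j
    rw [hTij i j]
    simp only [Ncal0, Md, Matrix.of_apply, iterDeriv_pow, Fin.val_mk, Nat.add_zero]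
  have htri : T.BlockTriangular OrderDual.toDual := by
    intro i j hij
    have : (i : ℕ) < (j : ℕ) := hij
    rw [hTval, Nat.descFactorial_eq_zero_iff_lt.mpr this]
    simp
  have hdet : T.det = 1 := by
    rw [Matrix.det_of_lowerTriangular T htri]
    have : ∀ i : Fin ν, T i i = 1 := by
      intro i
      rw [hTval, Nat.sub_self, Nat.descFactorial_self, pow_zero]
      field_simp
    simp [this]
  have hTrank : T.rank = ν := by
    rw [Matrix.rank_of_isUnit T ((Matrix.isUnit_iff_isUnit_det T).mpr
      (by rw [hdet]; exact isUnit_one)), Fintype.card_fin]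
  calc ν = T.rank := hTrank.symm
    _ ≤ (Ncal0 q r ν z * Q).rank := Matrix.rank_mul_le_right _ _
    _ ≤ (Ncal0 q r ν z).rank := Matrix.rank_mul_le_left _ _

theorem statement9 (q r ν : ℕ) (hq : 0 < q) (hr : 2 ≤ r) (hν : 0 < ν) (hνq : ν ≤ q) :
    ∀ z : ℝ,
      ((1 : Matrix (Fin ν) (Fin ν) ℝ) ⊗ₖ Fm r z + Sh ν ⊗ₖ Fm' r).rank = ν * (r - 1) ∧
      Ncal0 q r ν z * ((1 : Matrix (Fin ν) (Fin ν) ℝ) ⊗ₖ Fm r z + Sh ν ⊗ₖ Fm' r) = 0 ∧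
      Function.Injective
        (((1 : Matrix (Fin ν) (Fin ν) ℝ) ⊗ₖ Fm r z + Sh ν ⊗ₖ Fm' r).mulVecLin) ∧
      LinearMap.range (((1 : Matrix (Fin ν) (Fin ν) ℝ) ⊗ₖ Fm r z + Sh ν ⊗ₖ Fm' r).mulVecLin) =
        LinearMap.ker (Ncal0 q r ν z).mulVecLin ∧
      Module.finrank ℝ (LinearMap.ker (Ncal0 q r ν z).mulVecLin) = ν * (r - 1) := by
  intro z
  have hinj := K_inj r ν hr z
  have hNK := NK_zero q r ν hr z
  have hrankN := Ncal0_rank_ge q r ν hr hνq z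
  set K := (1 : Matrix (Fin ν) (Fin ν) ℝ) ⊗ₖ Fm r z + Sh ν ⊗ₖ Fm' r with hKdef
  have hcard : Module.finrank ℝ ((Fin ν × Fin (r-1)) → ℝ) = ν * (r-1) := by
    rw [Module.finrank_fintype_fun_eq_card, Fintype.card_prod, Fintype.card_fin, Fintype.card_fin]
  have hrangeK : Module.finrank ℝ (LinearMap.range K.mulVecLin) = ν * (r-1) := by
    rw [LinearMap.finrank_range_of_inj hinj, hcard]
  have hrankK : K.rank = ν * (r-1) := by rw [Matrix.rank, hrangeK]
  have hle : LinearMap.range K.mulVecLin ≤ LinearMap.ker (Ncal0 q r ν z).mulVecLin := by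
    rintro y ⟨x, rfl⟩
    rw [LinearMap.mem_ker, Matrix.mulVecLin_apply, Matrix.mulVecLin_apply,
      Matrix.mulVec_mulVec, hNK, Matrix.zero_mulVec]
  have hmul : ν * r = ν * (r - 1) + ν := by
    have h1 : r - 1 + 1 = r := by omega
    calc ν * r = ν * ((r-1) + 1) := by rw [h1]
      _ = ν * (r-1) + ν := by ring
  have hkerle : Module.finrank ℝ (LinearMap.ker (Ncal0 q r ν z).mulVecLin) ≤ ν * (r-1) := by
    have h1 := LinearMap.finrank_range_add_finrank_ker (Ncal0 q r ν z).mulVecLin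
    rw [Module.finrank_fintype_fun_eq_card, Fintype.card_prod, Fintype.card_fin,
      Fintype.card_fin] at h1
    have h3 : ν ≤ Module.finrank ℝ (LinearMap.range (Ncal0 q r ν z).mulVecLin) := hrankN
    omega
  have heq : LinearMap.range K.mulVecLin = LinearMap.ker (Ncal0 q r ν z).mulVecLin :=
    Submodule.eq_of_le_of_finrank_le hle (by rw [hrangeK]; exact hkerle)
  have hker : Module.finrank ℝ (LinearMap.ker (Ncal0 q r ν z).mulVecLin) = ν * (r-1) := by
    rw [← heq, hrangeK]
  exact ⟨hrankK, hNK, hinj, heq, hker⟩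
end
end
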